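/- arXiv:1605.06774 — 14 statements merged into one kernel-verified Lean document; each statement's English description precedes it below -/
import Mathlib

section
/- A positive integer n is an i-congruent number if and only if either n = p*k for some odd prime p and some positive integer k with k ≥ (p^2 - 1)/4, or n = 2^i * k for some integer i ≥ 1 and some odd positive integer k with k ≥ 2^(2i) - 1. -/
/-- A positive integer `n` is an *i-congruent number* if it is the area of a right trapezoid
with integer side lengths: parallel sides `a > d ≥ 0`, height `b`, slant side `c`,
with `gcd b c = 1`. -/
private lemma aux1 (M N e : ℤ) (hN : 1 ≤ N) (hM : N + 1 ≤ M) (he : e + N ^ 2 = M ^ 2) :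
    M ^ 2 ≤ e * N + 1 := by
  have h2 : 0 ≤ M ^ 2 - N ^ 2 - N - 1 := by nlinarith
  nlinarith [mul_nonneg (by linarith : (0:ℤ) ≤ N - 1) h2]

private lemma aux2 (N s : ℤ) (hN : 1 ≤ N) (hs : 1 ≤ s) :
    (2 * N + s) ^ 2 ≤ 4 * (N * (N + s) * s) + 1 := by
  have h2 : 0 ≤ 4 * N ^ 2 + 4 * N * s - s - 1 := by
    nlinarith [mul_nonneg (by linarith : (0:ℤ) ≤ N - 1) (by linarith : (0:ℤ) ≤ s),
      sq_nonneg (N - 1)]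
  nlinarith [mul_nonneg (by linarith : (0:ℤ) ≤ s - 1) h2]

def ICongruent (n : ℕ) : Prop :=
  ∃ a b c d : ℕ, 0 < a ∧ 0 < b ∧ 0 < c ∧ d < a ∧
    2 * n = (a + d) * b ∧ (a - d) ^ 2 + b ^ 2 = c ^ 2 ∧ Nat.gcd b c = 1

theorem icongruent_iff (n : ℕ) (hn : 0 < n) :
    ICongruent n ↔
      ((∃ p k : ℕ, p.Prime ∧ Odd p ∧ 0 < k ∧ p ^ 2 - 1 ≤ 4 * k ∧ n = p * k) ∨
       (∃ i k : ℕ, 1 ≤ i ∧ 0 < k ∧ Odd k ∧ 2 ^ (2 * i) - 1 ≤ k ∧ n = 2 ^ i * k)) := by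
  constructor
  · rintro ⟨a, b, c, d, ha, hb, hc, hda, harea, hpyth, hgcd⟩
    set e := a - d with he_def
    have he : 0 < e := by omega
    have hcop_eb : Nat.gcd e b = 1 := by
      have h1 : Nat.gcd e b ∣ e := Nat.gcd_dvd_left _ _
      have h2 : Nat.gcd e b ∣ b := Nat.gcd_dvd_right _ _
      have h3 : (Nat.gcd e b) ^ 2 ∣ c ^ 2 := by
        rw [← hpyth]
        exact dvd_add (pow_dvd_pow_of_dvd h1 2) (pow_dvd_pow_of_dvd h2 2)
      have h4 : Nat.gcd e b ∣ c := (Nat.pow_dvd_pow_iff two_ne_zero).mp h3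
      have h5 : Nat.gcd e b ∣ Nat.gcd b c := Nat.dvd_gcd h2 h4
      rw [hgcd] at h5
      exact Nat.dvd_one.mp h5
    have hPT : PythagoreanTriple (e : ℤ) (b : ℤ) (c : ℤ) := by
      show (e : ℤ) * e + b * b = c * c
      have h := hpyth
      zify at h
      nlinarith [h]
    have hIcop : Int.gcd (e : ℤ) (b : ℤ) = 1 := by
      rw [Int.gcd_natCast_natCast]; exact hcop_eb
    obtain ⟨m, m', hmn, hz, hcopmn, hpar⟩ :=
      PythagoreanTriple.coprime_classification.mp ⟨hPT, hIcop⟩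
    have harea' : 2 * n = (e + 2 * d) * b := by
      have : a + d = e + 2 * d := by omega
      rw [harea, this]
    rcases hmn with ⟨hx, hy⟩ | ⟨hx, hy⟩
    · -- e = m² - n'², b = 2 m n'  (case B)
      set M := m.natAbs with hM_def
      set N := m'.natAbs with hN_def
      have hmn_pos : 0 < m * m' := by
        by_contra hcon
        push_neg at hcon
        have : (b : ℤ) ≤ 0 := by rw [hy]; linarith
        omega
      have hb_eq : b = 2 * (M * N) := by
        have h1 : (b : ℤ) = 2 * (M * N : ℕ) := by
          rw [hy]
          have : ((M * N : ℕ) : ℤ) = m * m' := by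
            push_cast [hM_def, hN_def, ← Int.natAbs_mul]
            exact abs_of_nonneg hmn_pos.le
          rw [this]; ring
        exact_mod_cast h1
      have he_eq : e + N ^ 2 = M ^ 2 := by
        have h1 : (e : ℤ) + (N : ℤ) ^ 2 = (M : ℤ) ^ 2 := by
          rw [hM_def, hN_def, Int.natAbs_sq, Int.natAbs_sq, hx]; ring
        exact_mod_cast h1
      have hN1 : 1 ≤ N := by
        rcases Nat.eq_zero_or_pos N with h0 | h; · simp [hN_def] at h0; simp [h0] at hmn_pos
        exact h
      have hNM : N < M := by
        by_contra hcon
        push_neg at hcon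
        have : M ^ 2 ≤ N ^ 2 := Nat.pow_le_pow_left hcon 2
        omega
      have hn_eq : n = (e + 2 * d) * (M * N) := by
        have h2 : 2 * n = 2 * ((e + 2 * d) * (M * N)) := by
          rw [harea', hb_eq]; ring
        omega
      by_cases hex : ∃ p, p.Prime ∧ p ≠ 2 ∧ p ∣ M * N
      · obtain ⟨p, pp, p2, pdvd⟩ := hex
        obtain ⟨r, hr⟩ := pdvd
        left
        refine ⟨p, (e + 2 * d) * r, pp, pp.odd_of_ne_two p2, ?_, ?_, ?_⟩
        · have : 0 < M * N := Nat.mul_pos (by omega) (by omega)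
          have : 0 < r := by
            rcases Nat.eq_zero_or_pos r with h0 | h; · rw [h0, mul_zero] at hr; omega
            exact h
          positivity
        · -- p² - 1 ≤ 4 k
          have hple : p ≤ M ∧ N ≤ r := by
            rcases (Nat.Prime.dvd_mul pp).mp ⟨r, hr⟩ with hpM | hpN
            · obtain ⟨u, hu⟩ := hpM
              have hu1 : 1 ≤ u := by
                rcases Nat.eq_zero_or_pos u with h0 | h; · rw [h0, mul_zero] at hu; omega
                exact h
              have hrval : r = u * N := by
                have : p * r = p * (u * N) := by rw [← hr, hu]; ring
                exact Nat.eq_of_mul_eq_mul_left pp.pos this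
              constructor
              · exact Nat.le_of_dvd (by omega) ⟨u, hu⟩
              · rw [hrval]; exact Nat.le_mul_of_pos_left N hu1
            · obtain ⟨u, hu⟩ := hpN
              have hu1 : 1 ≤ u := by
                rcases Nat.eq_zero_or_pos u with h0 | h; · rw [h0, mul_zero] at hu; omega
                exact h
              have hrval : r = M * u := by
                have : p * r = p * (M * u) := by rw [← hr, hu]; ring
                exact Nat.eq_of_mul_eq_mul_left pp.pos this
              constructor
              · calc p ≤ N := Nat.le_of_dvd (by omega) ⟨u, hu⟩
                  _ ≤ M := hNM.le
              · rw [hrval]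
                calc N ≤ M := hNM.le
                  _ ≤ M * u := Nat.le_mul_of_pos_right M hu1
          obtain ⟨hpM, hNr⟩ := hple
          rw [Nat.sub_le_iff_le_add]
          have h1 : p ^ 2 ≤ M ^ 2 := Nat.pow_le_pow_left hpM 2
          have h2 : M ^ 2 ≤ e * N + 1 := by
            zify
            exact aux1 M N e (by exact_mod_cast hN1) (by exact_mod_cast hNM)
              (by exact_mod_cast he_eq)
          have h3 : e * N ≤ (e + 2 * d) * r :=
            Nat.mul_le_mul (by omega) hNr
          omega
        · rw [hn_eq, hr]; ring
      · -- M*N is a power of two, hence N = 1 and M = 2^i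
        have hall : ∀ q : ℕ, q.Prime → q ∣ M * N → q = 2 := by
          intro q hq hdq
          by_contra h2q
          exact hex ⟨q, hq, h2q, hdq⟩
        have hcopMN : Nat.Coprime M N := hcopmn
        have hM2 : 2 ≤ M := by omega
        have h2M : 2 ∣ M := by
          have := hall M.minFac (Nat.minFac_prime (by omega)) ((Nat.minFac_dvd M).mul_right N)
          rw [← this]; exact Nat.minFac_dvd M
        have hNeq1 : N = 1 := by
          by_contra hN1'
          have hN2 : 2 ≤ N := by omega
          have h2N : 2 ∣ N := by
            have := hall N.minFac (Nat.minFac_prime (by omega)) ((Nat.minFac_dvd N).mul_left M)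
            rw [← this]; exact Nat.minFac_dvd N
          have : (2 : ℕ) ∣ Nat.gcd M N := Nat.dvd_gcd h2M h2N
          rw [hcopMN] at this
          omega
        have hMpow : M = 2 ^ M.primeFactorsList.length :=
          Nat.eq_prime_pow_of_unique_prime_dvd (by omega)
            (fun {q} hq hdq => hall q hq (hdq.mul_right N))
        set i := M.primeFactorsList.length with hi_def
        have hi1 : 1 ≤ i := by
          rcases Nat.eq_zero_or_pos i with h0 | h; · rw [h0, pow_zero] at hMpow; omega
          exact h
        right
        have hM2i : M ^ 2 = 2 ^ (2 * i) := by
          rw [hMpow, ← pow_mul, Nat.mul_comm]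
        have he2 : e + 1 = 2 ^ (2 * i) := by
          rw [← hM2i, ← he_eq, hNeq1]; ring
        have h2dvd : 2 ∣ 2 ^ (2 * i) := dvd_pow_self 2 (by omega)
        refine ⟨i, e + 2 * d, hi1, by omega, ?_, by omega, ?_⟩
        · rw [Nat.odd_iff]; omega
        · rw [hn_eq, hNeq1, hMpow]; ring
    · -- e = 2 m n', b = m² - n'²  (case A)
      set M := m.natAbs with hM_def
      set N := m'.natAbs with hN_def
      have hmn_pos : 0 < m * m' := by
        by_contra hcon
        push_neg at hcon
        have : (e : ℤ) ≤ 0 := by rw [hx]; linarith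
        omega
      have he_eq : e = 2 * (M * N) := by
        have h1 : (e : ℤ) = 2 * (M * N : ℕ) := by
          rw [hx]
          have : ((M * N : ℕ) : ℤ) = m * m' := by
            push_cast [hM_def, hN_def, ← Int.natAbs_mul]
            exact abs_of_nonneg hmn_pos.le
          rw [this]; ring
        exact_mod_cast h1
      have hb_eq : b + N ^ 2 = M ^ 2 := by
        have h1 : (b : ℤ) + (N : ℤ) ^ 2 = (M : ℤ) ^ 2 := by
          rw [hM_def, hN_def, Int.natAbs_sq, Int.natAbs_sq, hy]; ring
        exact_mod_cast h1
      have hN1 : 1 ≤ N := by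
        rcases Nat.eq_zero_or_pos N with h0 | h; · simp [hN_def] at h0; simp [h0] at hmn_pos
        exact h
      have hNM : N < M := by
        by_contra hcon
        push_neg at hcon
        have : M ^ 2 ≤ N ^ 2 := Nat.pow_le_pow_left hcon 2
        omega
      have hoddMN : Odd (M + N) := by
        rcases hpar with ⟨hm0, hm1⟩ | ⟨hm0, hm1⟩
        · have h1 : Even M := by
            rw [hM_def, Int.natAbs_even]
            exact Int.even_iff.mpr hm0
          have h2 : Odd N := by
            rw [hN_def, Int.natAbs_odd]
            exact Int.odd_iff.mpr hm1
          exact h1.add_odd h2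
        · have h1 : Odd M := by
            rw [hM_def, Int.natAbs_odd]
            exact Int.odd_iff.mpr hm0
          have h2 : Even N := by
            rw [hN_def, Int.natAbs_even]
            exact Int.even_iff.mpr hm1
          exact h1.add_even h2
      have hn_eq : n = (M * N + d) * b := by
        have h2 : 2 * n = 2 * ((M * N + d) * b) := by
          rw [harea', he_eq]; ring
        omega
      obtain ⟨s, hs1, hMs⟩ : ∃ s, 1 ≤ s ∧ M = N + s := ⟨M - N, by omega, by omega⟩
      have hb2 : b = 2 * N * s + s ^ 2 := by
        have hexp : (N + s) ^ 2 = N ^ 2 + (2 * N * s + s ^ 2) := by ring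
        rw [hMs, hexp] at hb_eq
        omega
      set P := (2 * N + s).minFac with hP_def
      have hT3 : 3 ≤ 2 * N + s := by omega
      have pp : P.Prime := Nat.minFac_prime (by omega)
      have hdvd : P ∣ 2 * N + s := Nat.minFac_dvd _
      have hoddT : Odd (2 * N + s) := by
        have : M + N = 2 * N + s := by omega
        rwa [this] at hoddMN
      have hoddP : Odd P := by
        rcases pp.eq_two_or_odd' with h2 | h; swap; · exact h
        exfalso
        rw [h2] at hdvd
        rw [Nat.odd_iff] at hoddT
        omega
      obtain ⟨q, hq⟩ := hdvd
      have hq1 : 1 ≤ q := by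
        rcases Nat.eq_zero_or_pos q with h0 | h; · rw [h0, mul_zero] at hq; omega
        exact h
      left
      have hk_pos : 0 < ((N + s) * N + d) * (s * q) := by
        have h1 : 0 < (N + s) * N := Nat.mul_pos (by omega) (by omega)
        have h2 : 0 < s * q := Nat.mul_pos (by omega) (by omega)
        exact Nat.mul_pos (by omega) h2
      refine ⟨P, ((N + s) * N + d) * (s * q), pp, hoddP, hk_pos, ?_, ?_⟩
      · rw [Nat.sub_le_iff_le_add]
        have hPle : P ≤ 2 * N + s := Nat.minFac_le (by omega)
        have h1 : P ^ 2 ≤ (2 * N + s) ^ 2 := Nat.pow_le_pow_left hPle 2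
        have h2 : (2 * N + s) ^ 2 ≤ 4 * (N * (N + s) * s) + 1 := by
          zify
          exact aux2 N s (by exact_mod_cast hN1) (by exact_mod_cast hs1)
        have h3 : N * (N + s) * s ≤ ((N + s) * N + d) * (s * q) := by
          calc N * (N + s) * s = ((N + s) * N) * (s * 1) := by ring
            _ ≤ ((N + s) * N + d) * (s * q) :=
              Nat.mul_le_mul (by omega) (Nat.mul_le_mul_left s hq1)
        linarith
      · rw [hn_eq, hMs, hb2]
        have hfact : 2 * N * s + s ^ 2 = s * (P * q) := by rw [← hq]; ring
        rw [hfact]; ring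
  · rintro (⟨p, k, pp, podd, hk, hineq, hnpk⟩ | ⟨i, k, hi, hk, kodd, hineq, hnik⟩)
    · obtain ⟨r, hr⟩ := podd
      have hr1 : 1 ≤ r := by
        have := pp.two_le; omega
      set A := r * (r + 1) with hA_def
      have hA1 : 1 ≤ A := Nat.mul_pos (by omega) (by omega)
      have hsq : p ^ 2 = 4 * A + 1 := by rw [hr, hA_def]; ring
      have hAk : A ≤ k := by
        have h1 : p ^ 2 ≤ 4 * k + 1 := Nat.sub_le_iff_le_add.mp hineq
        omega
      refine ⟨2 * A + (k - A), p, 2 * A + 1, k - A, by omega, pp.pos, by omega, by omega, ?_, ?_, ?_⟩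
      · rw [hnpk]
        have h1 : 2 * A + (k - A) + (k - A) = 2 * k := by omega
        rw [h1]
        ring
      · have h1 : 2 * A + (k - A) - (k - A) = 2 * A := by omega
        rw [h1, hsq]
        ring
      · have hc : 2 * (2 * A + 1) = p * p + 1 := by
          rw [hr, hA_def]; ring
        have hg1 : Nat.gcd p (2 * A + 1) ∣ p := Nat.gcd_dvd_left _ _
        have hg2 : Nat.gcd p (2 * A + 1) ∣ 2 * A + 1 := Nat.gcd_dvd_right _ _
        have hd1 : Nat.gcd p (2 * A + 1) ∣ 2 * (2 * A + 1) - p * p :=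
          Nat.dvd_sub (hg2.mul_left 2) (hg1.mul_right p)
        have heq1 : 2 * (2 * A + 1) - p * p = 1 :=
          Nat.sub_eq_of_eq_add (by omega)
        rw [heq1] at hd1
        exact Nat.dvd_one.mp hd1
    · set X := (2 : ℕ) ^ (2 * i) with hX_def
      have hX2 : 2 ∣ X := dvd_pow_self 2 (by omega)
      have hX4 : 4 ≤ X := by
        calc (4 : ℕ) = 2 ^ 2 := by norm_num
          _ ≤ 2 ^ (2 * i) := Nat.pow_le_pow_right (by norm_num) (by omega)
      obtain ⟨t, ht⟩ := kodd
      obtain ⟨u, hu⟩ := hX2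
      obtain ⟨D, hD⟩ : ∃ D, k = (X - 1) + 2 * D := ⟨t + 1 - u, by omega⟩
      refine ⟨(X - 1) + D, 2 ^ (i + 1), (X - 1) + 2, D, by omega, by positivity, by omega,
        by omega, ?_, ?_, ?_⟩
      · rw [hnik]
        have h1 : (X - 1) + D + D = k := by omega
        rw [h1]
        have h2 : (2 : ℕ) ^ (i + 1) = 2 * 2 ^ i := by rw [pow_succ]; ring
        rw [h2]; ring
      · have h1 : (X - 1) + D - D = X - 1 := by omega
        rw [h1]
        have hb2 : ((2 : ℕ) ^ (i + 1)) ^ 2 = X * 4 := by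
          rw [← pow_mul, hX_def]
          have h3 : (i + 1) * 2 = 2 * i + 2 := by ring
          rw [h3, pow_add]
          norm_num
        rw [hb2]
        obtain ⟨Y, hY⟩ : ∃ Y, X = Y + 1 := ⟨X - 1, by omega⟩
        have h4 : X - 1 = Y := by omega
        rw [h4, hY]
        ring
      · have hodd_c : Odd ((X - 1) + 2) := by
          rw [Nat.odd_iff]; omega
        have h5 : Nat.Coprime 2 ((X - 1) + 2) := Nat.coprime_two_left.mpr hodd_c
        exact (h5.pow_left (i + 1))
end

section
/- An integer n > 1 is NOT an i-congruent number if and only if n has one of the following forms: (i) n = p for a prime p; (ii) n = p^2 for a prime p with p ≠ 3; (iii) n = p*q for primes p, q with 5 < p < q < (p^2 - 1)/4; (iv) n = 2^i for an integer i ≥ 1; (v) n = 2^i * p for an integer i ≥ 2 and an odd prime p with p^2 > 2^(i+2) and p < 2^(2i) - 1. -/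
lemma sq_mod_two' (s : ℕ) : s ^ 2 % 2 = s % 2 := by
  rw [Nat.pow_mod]
  rcases Nat.mod_two_eq_zero_or_one s with h | h <;> simp [h]

lemma sq_mod_four' (x : ℕ) : x ^ 2 % 4 = 0 ∨ x ^ 2 % 4 = 1 := by
  rw [Nat.pow_mod]
  have h : x % 4 = 0 ∨ x % 4 = 1 ∨ x % 4 = 2 ∨ x % 4 = 3 := by omega
  rcases h with h | h | h | h <;> simp [h]

lemma odd_sq_mod_four' {x : ℕ} (h : x % 2 = 1) : x ^ 2 % 4 = 1 := by
  obtain ⟨j, rfl⟩ : ∃ j, x = 2 * j + 1 := ⟨x / 2, by omega⟩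
  have : (2 * j + 1) ^ 2 = 4 * (j * j + j) + 1 := by ring
  omega

/-- classification of the primitive triple arising in ICongruent -/
lemma classify' {e b c : ℕ} (he : 0 < e) (hb : 0 < b)
    (hpy : e ^ 2 + b ^ 2 = c ^ 2) (hbc : Nat.gcd b c = 1) :
    ∃ s t E : ℕ, 0 < t ∧ t < s ∧ Nat.gcd s t = 1 ∧ (s + t) % 2 = 1 ∧
      E + t ^ 2 = s ^ 2 ∧ ((e = E ∧ b = 2 * (s * t)) ∨ (e = 2 * (s * t) ∧ b = E)) := by
  -- gcd e b = 1
  have hceb : Nat.gcd e b = 1 := by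
    set g := Nat.gcd e b with hg
    have h1 : g ∣ e := Nat.gcd_dvd_left _ _
    have h2 : g ∣ b := Nat.gcd_dvd_right _ _
    have h3 : g ^ 2 ∣ c ^ 2 := by
      rw [← hpy]; exact Dvd.dvd.add (pow_dvd_pow_of_dvd h1 2) (pow_dvd_pow_of_dvd h2 2)
    have h4 : g ∣ c := (Nat.pow_dvd_pow_iff (by norm_num)).mp h3
    exact Nat.eq_one_of_dvd_coprimes hbc h2 h4
  have hc0 : 0 < c := by
    rcases Nat.eq_zero_or_pos c with h | h
    · subst h
      have : e ^ 2 = 0 := by omega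
      have : e = 0 := by nlinarith
      omega
    · exact h
  -- parity split
  have hpar : e % 2 = 1 ∧ b % 2 = 0 ∨ e % 2 = 0 ∧ b % 2 = 1 := by
    rcases Nat.mod_two_eq_zero_or_one e with h1 | h1 <;>
      rcases Nat.mod_two_eq_zero_or_one b with h2 | h2
    · exfalso
      have : (2 : ℕ) ∣ Nat.gcd e b :=
        Nat.dvd_gcd (Nat.dvd_of_mod_eq_zero h1) (Nat.dvd_of_mod_eq_zero h2)
      omega
    · exact Or.inr ⟨h1, h2⟩
    · exact Or.inl ⟨h1, h2⟩
    · exfalso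
      have q1 := odd_sq_mod_four' h1
      have q2 := odd_sq_mod_four' h2
      have q3 := sq_mod_four' c
      omega
  have key : ∀ x y : ℕ, 0 < x → 0 < y → x ^ 2 + y ^ 2 = c ^ 2 → Nat.gcd x y = 1 →
      x % 2 = 1 →
      ∃ s t : ℕ, 0 < t ∧ t < s ∧ Nat.gcd s t = 1 ∧
        (x : ℤ) = (s : ℤ) ^ 2 - (t : ℤ) ^ 2 ∧ (y : ℤ) = 2 * ((s : ℤ) * t) := by
    intro x y hx hy hxy hcop hodd
    have htri : PythagoreanTriple (x : ℤ) y c := by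
      have hq : (x : ℤ) ^ 2 + (y : ℤ) ^ 2 = (c : ℤ) ^ 2 := by exact_mod_cast hxy
      rw [PythagoreanTriple]
      linear_combination hq
    have hgcd : Int.gcd (x : ℤ) (y : ℤ) = 1 := by
      rw [Int.gcd_natCast_natCast]; exact hcop
    have hx2 : (x : ℤ) % 2 = 1 := by omega
    have hcpos : (0 : ℤ) < c := by exact_mod_cast hc0
    obtain ⟨m, n, h1, h2, h3, h4, h5, h6⟩ :=
      htri.coprime_classification' hgcd hx2 hcpos
    have hxz : (0 : ℤ) < (x : ℤ) := by exact_mod_cast hx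
    have hyz : (0 : ℤ) < (y : ℤ) := by exact_mod_cast hy
    have hmpos : 0 < m := by
      rcases lt_or_eq_of_le h6 with h | h
      · exact h
      · exfalso; rw [← h] at h2; simp at h2; omega
    have hnpos : 0 < n := by
      by_contra hcon
      push_neg at hcon
      have : (y : ℤ) ≤ 0 := by nlinarith
      omega
    have hnm : n < m := by
      by_contra hcon
      push_neg at hcon
      have : m ^ 2 ≤ n ^ 2 := by nlinarith
      omega
    refine ⟨m.natAbs, n.natAbs, ?_, ?_, ?_, ?_, ?_⟩
    · omega
    · omega
    · exact h4
    · rw [Int.natAbs_of_nonneg hmpos.le, Int.natAbs_of_nonneg hnpos.le]; exact h1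
    · rw [Int.natAbs_of_nonneg hmpos.le, Int.natAbs_of_nonneg hnpos.le]
      rw [h2]; ring
  rcases hpar with ⟨h1, h2⟩ | ⟨h1, h2⟩
  · obtain ⟨s, t, ht0, hts, hst, hx1, hy1⟩ := key e b he hb hpy hceb h1
    have ht2 : t ^ 2 ≤ s ^ 2 := Nat.pow_le_pow_left hts.le 2
    refine ⟨s, t, s ^ 2 - t ^ 2, ht0, hts, hst, ?_, by omega, Or.inl ⟨?_, ?_⟩⟩
    · have q1 := sq_mod_two' s
      have q2 := sq_mod_two' t
      have hE : (e : ℤ) = ((s ^ 2 - t ^ 2 : ℕ) : ℤ) := by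
        rw [hx1]; push_cast [ht2]; ring
      have heE : e = s ^ 2 - t ^ 2 := by exact_mod_cast hE
      omega
    · have hE : (e : ℤ) = ((s ^ 2 - t ^ 2 : ℕ) : ℤ) := by
        rw [hx1]; push_cast [ht2]; ring
      exact_mod_cast hE
    · exact_mod_cast hy1
  · obtain ⟨s, t, ht0, hts, hst, hx1, hy1⟩ := key b e hb he (by omega) (Nat.gcd_comm e b ▸ hceb) h2
    have ht2 : t ^ 2 ≤ s ^ 2 := Nat.pow_le_pow_left hts.le 2
    have hE : (b : ℤ) = ((s ^ 2 - t ^ 2 : ℕ) : ℤ) := by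
      rw [hx1]; push_cast [ht2]; ring
    have hbE : b = s ^ 2 - t ^ 2 := by exact_mod_cast hE
    refine ⟨s, t, s ^ 2 - t ^ 2, ht0, hts, hst, ?_, by omega, Or.inr ⟨?_, hbE⟩⟩
    · have q1 := sq_mod_two' s
      have q2 := sq_mod_two' t
      omega
    · exact_mod_cast hy1


lemma cop_even {s t : ℕ} (hst : Nat.gcd s t = 1) (hodd : (s ^ 2 + t ^ 2) % 2 = 1) :
    Nat.gcd (2 * (s * t)) (s ^ 2 + t ^ 2) = 1 := by
  have c2 : Nat.Coprime 2 (s ^ 2 + t ^ 2) :=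
    (Nat.prime_two.coprime_iff_not_dvd).mpr (by omega)
  have cs : Nat.Coprime s (s ^ 2 + t ^ 2) := by
    have h1 : Nat.Coprime s (t ^ 2) := Nat.Coprime.pow_right 2 hst
    have h2 : Nat.Coprime s (t ^ 2 + s * s) :=
      (Nat.coprime_add_mul_left_right s (t ^ 2) s).mpr h1
    have h3 : t ^ 2 + s * s = s ^ 2 + t ^ 2 := by ring
    rwa [h3] at h2
  have ct : Nat.Coprime t (s ^ 2 + t ^ 2) := by
    have h1 : Nat.Coprime t (s ^ 2) := Nat.Coprime.pow_right 2 (Nat.coprime_comm.mp hst)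
    have h2 : Nat.Coprime t (s ^ 2 + t * t) :=
      (Nat.coprime_add_mul_left_right t (s ^ 2) t).mpr h1
    have h3 : s ^ 2 + t * t = s ^ 2 + t ^ 2 := by ring
    rwa [h3] at h2
  exact Nat.Coprime.mul c2 (Nat.Coprime.mul cs ct)

lemma cop_odd {s t E : ℕ} (hst : Nat.gcd s t = 1) (hE : E + t ^ 2 = s ^ 2)
    (hEodd : E % 2 = 1) : Nat.gcd E (E + 2 * t ^ 2) = 1 := by
  set g := Nat.gcd E (E + 2 * t ^ 2) with hg
  have h1 : g ∣ E := Nat.gcd_dvd_left _ _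
  have h2 : g ∣ E + 2 * t ^ 2 := Nat.gcd_dvd_right _ _
  have h3 : g ∣ 2 * t ^ 2 := (Nat.dvd_add_right h1).mp h2
  have hgodd : ¬ (2 ∣ g) := by
    intro hcon
    have h4 : 2 ∣ E := hcon.trans h1
    omega
  have hcg : Nat.Coprime g 2 := ((Nat.prime_two.coprime_iff_not_dvd).mpr hgodd).symm
  have h5 : g ∣ t ^ 2 := Nat.Coprime.dvd_of_dvd_mul_left hcg h3
  have h6 : g ∣ s ^ 2 := hE ▸ Nat.dvd_add h1 h5
  have h7 : Nat.Coprime (s ^ 2) (t ^ 2) := Nat.Coprime.pow 2 2 hst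
  exact Nat.eq_one_of_dvd_coprimes h7 h6 h5

lemma ic_iff (n : ℕ) : ICongruent n ↔
    ∃ s t E : ℕ, 0 < t ∧ t < s ∧ Nat.gcd s t = 1 ∧ (s + t) % 2 = 1 ∧ E + t ^ 2 = s ^ 2 ∧
      ((∃ m, m % 2 = 1 ∧ E ≤ m ∧ n = m * (s * t)) ∨ (∃ k, s * t ≤ k ∧ n = k * E)) := by
  constructor
  · rintro ⟨a, b, c, d, ha, hb, hc, hda, harea, hpy, hbc⟩
    obtain ⟨s, t, E, ht0, hts, hst, hpar, hE, hcase⟩ :=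
      classify' (e := a - d) (by omega) hb hpy hbc
    have q1 := sq_mod_two' s
    have q2 := sq_mod_two' t
    have q3 := sq_mod_two' (a - d)
    have hEodd : E % 2 = 1 := by omega
    refine ⟨s, t, E, ht0, hts, hst, hpar, hE, ?_⟩
    rcases hcase with ⟨he1, hb1⟩ | ⟨he1, hb1⟩
    · left
      refine ⟨a + d, ?_, by omega, ?_⟩
      · omega
      · rw [hb1] at harea
        have : 2 * n = 2 * ((a + d) * (s * t)) := by rw [harea]; ring
        omega
    · right
      refine ⟨s * t + d, by omega, ?_⟩
      have had : a + d = 2 * (s * t + d) := by omega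
      rw [hb1, had] at harea
      have : 2 * n = 2 * ((s * t + d) * E) := by rw [harea]; ring
      omega
  · rintro ⟨s, t, E, ht0, hts, hst, hpar, hE, hcase⟩
    have q1 := sq_mod_two' s
    have q2 := sq_mod_two' t
    have hEodd : E % 2 = 1 := by omega
    have hsq : (t + 1) ^ 2 ≤ s ^ 2 := Nat.pow_le_pow_left (by omega) 2
    have hexp : (t + 1) ^ 2 = t ^ 2 + 2 * t + 1 := by ring
    have hEge : 2 * t + 1 ≤ E := by omega
    have hpyth : E ^ 2 + (2 * (s * t)) ^ 2 = (E + 2 * t ^ 2) ^ 2 := by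
      zify
      have hE' : (E : ℤ) + (t : ℤ) ^ 2 = (s : ℤ) ^ 2 := by exact_mod_cast hE
      linear_combination (-4 * (t : ℤ) ^ 2) * hE'
    have hcodd : (E + 2 * t ^ 2) % 2 = 1 := by omega
    rcases hcase with ⟨m, hm1, hm2, hm3⟩ | ⟨k, hk1, hk2⟩
    · refine ⟨E + (m - E) / 2, 2 * (s * t), E + 2 * t ^ 2, (m - E) / 2,
        by omega, Nat.mul_pos (by norm_num) (Nat.mul_pos (by omega) ht0), by omega, by omega, ?_, ?_, ?_⟩
      · have had : E + (m - E) / 2 + (m - E) / 2 = m := by omega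
        rw [had, hm3]; ring
      · have had : E + (m - E) / 2 - (m - E) / 2 = E := by omega
        rw [had]; exact hpyth
      · have hc' : E + 2 * t ^ 2 = s ^ 2 + t ^ 2 := by omega
        rw [hc']
        exact cop_even hst (by omega)
    · have hst1 : 1 ≤ s * t := Nat.mul_pos (by omega) ht0
      refine ⟨s * t + k, E, E + 2 * t ^ 2, k - s * t,
        by omega, by omega, by omega, by omega, ?_, ?_, ?_⟩
      · have had : s * t + k + (k - s * t) = 2 * k := by omega
        rw [had, hk2]; ring
      · have had : s * t + k - (k - s * t) = 2 * (s * t) := by omega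
        rw [had]
        have : (2 * (s * t)) ^ 2 + E ^ 2 = E ^ 2 + (2 * (s * t)) ^ 2 := by ring
        rw [this]; exact hpyth
      · exact cop_odd hst hE hEodd


lemma st_prime {s t p : ℕ} (hp : p.Prime) (ht0 : 0 < t) (hts : t < s) (h : s * t = p) :
    t = 1 ∧ s = p := by
  have ht : t ∣ p := ⟨s, by rw [← h]; ring⟩
  rcases hp.eq_one_or_self_of_dvd t ht with h1 | h1
  · subst h1; exact ⟨rfl, by simpa using h⟩
  · exfalso
    subst h1
    have hs1 : s = 1 := by
      have : s * t = 1 * t := by rw [h, one_mul]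
      exact Nat.eq_of_mul_eq_mul_right ht0 this
    omega

lemma E_prime {s t E p : ℕ} (hp : p.Prime) (ht0 : 0 < t) (hts : t < s)
    (hE : E + t ^ 2 = s ^ 2) (h : E = p) : s = t + 1 ∧ p = 2 * t + 1 := by
  have hfact : (s + t) * (s - t) + t ^ 2 = s ^ 2 := by
    zify [hts.le]
    ring
  have hEf : E = (s + t) * (s - t) := by omega
  have hd : (s + t) ∣ p := ⟨s - t, by rw [← h]; exact hEf⟩
  rcases hp.eq_one_or_self_of_dvd _ hd with h1 | h1
  · omega
  · have h2 : (s + t) * (s - t) = (s + t) * 1 := by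
      rw [mul_one, ← hEf, h, h1]
    have h3 : s - t = 1 := Nat.eq_of_mul_eq_mul_left (by omega) h2
    omega

lemma odd_dvd_pow_two {m i : ℕ} (hm : m % 2 = 1) (h : m ∣ 2 ^ i) : m = 1 := by
  have hc : Nat.Coprime m 2 := ((Nat.prime_two.coprime_iff_not_dvd).mpr (by omega)).symm
  exact Nat.Coprime.eq_one_of_dvd (hc.pow_right i) h

lemma odd_dvd_pow_two_mul {m i p : ℕ} (hm : m % 2 = 1) (h : m ∣ 2 ^ i * p) : m ∣ p := by
  have hc : Nat.Coprime m 2 := ((Nat.prime_two.coprime_iff_not_dvd).mpr (by omega)).symm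
  exact Nat.Coprime.dvd_of_dvd_mul_left (hc.pow_right i) h

lemma dvd_prime_mul_prime {d p q : ℕ} (hp : p.Prime) (hq : q.Prime)
    (h : d ∣ p * q) : d = 1 ∨ d = p ∨ d = q ∨ d = p * q := by
  rcases Nat.dvd_mul.mp h with ⟨x, y, hx, hy, rfl⟩
  rcases hp.eq_one_or_self_of_dvd x hx with h1 | h1 <;>
    rcases hq.eq_one_or_self_of_dvd y hy with h2 | h2 <;> subst h1 <;> subst h2 <;> simp

lemma dvd_prime_sq {d p : ℕ} (hp : p.Prime) (h : d ∣ p ^ 2) : d = 1 ∨ d = p ∨ d = p ^ 2 := by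
  rw [Nat.dvd_prime_pow hp] at h
  obtain ⟨j, hj2, rfl⟩ := h
  interval_cases j
  · exact Or.inl (pow_zero p)
  · exact Or.inr (Or.inl (pow_one p))
  · exact Or.inr (Or.inr rfl)


/-- Construction B : trapezoid with odd leg p -/
lemma icB {n p k : ℕ} (hp : p.Prime) (hpo : p % 2 = 1) (hn : n = k * p)
    (hk : p ^ 2 ≤ 4 * k + 1) : ICongruent n := by
  rw [ic_iff]
  have hp3 : 3 ≤ p := by have := hp.two_le; omega
  set t := p / 2 with hht
  have hpt : p = 2 * t + 1 := by omega
  refine ⟨t + 1, t, p, by omega, by omega, (by simp [Nat.gcd_comm] : Nat.gcd (t+1) t = 1), by omega,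
    by rw [hpt]; ring, Or.inr ⟨k, ?_, hn⟩⟩
  have hps : p ^ 2 = 4 * ((t + 1) * t) + 1 := by rw [hpt]; ring
  omega

/-- Construction A with t = 1 : trapezoid with even leg 2s -/
lemma icA1 {n s m : ℕ} (hs : 2 ≤ s) (hse : s % 2 = 0) (hm : m % 2 = 1)
    (hge : s ^ 2 ≤ m + 1) (hn : n = m * s) : ICongruent n := by
  rw [ic_iff]
  have h1 : (1 : ℕ) ^ 2 = 1 := one_pow 1
  have h2 : 1 ≤ s ^ 2 := Nat.one_le_pow _ _ (by omega)
  refine ⟨s, 1, s ^ 2 - 1, one_pos, by omega, Nat.coprime_one_right s, by omega,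
    by omega, Or.inl ⟨m, hm, by omega, by rw [hn]; ring⟩⟩

lemma ic_of_not_list {n : ℕ} (hn : 1 < n)
    (hl : ¬ (n.Prime ∨
       (∃ p : ℕ, p.Prime ∧ p ≠ 3 ∧ n = p ^ 2) ∨
       (∃ p q : ℕ, p.Prime ∧ q.Prime ∧ 5 < p ∧ p < q ∧ 4 * q < p ^ 2 - 1 ∧ n = p * q) ∨
       (∃ i : ℕ, 1 ≤ i ∧ n = 2 ^ i) ∨
       (∃ i p : ℕ, 2 ≤ i ∧ p.Prime ∧ Odd p ∧ 2 ^ (i + 2) < p ^ 2 ∧ p < 2 ^ (2 * i) - 1 ∧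
         n = 2 ^ i * p))) : ICongruent n := by
  obtain ⟨i, u, hu2, hnu⟩ :=
    Nat.exists_eq_pow_mul_and_not_dvd (show n ≠ 0 by omega) 2 (by norm_num)
  have hu1 : u % 2 = 1 := by omega
  have hu0 : 0 < u := by omega
  by_cases hu : u = 1
  · -- n = 2^i : form (iv), contradiction
    exfalso
    subst hu
    rw [mul_one] at hnu
    have hi : 1 ≤ i := by
      rcases Nat.eq_zero_or_pos i with h0 | h1
      · exfalso; rw [h0, pow_zero] at hnu; omega
      · exact h1
    exact hl (Or.inr (Or.inr (Or.inr (Or.inl ⟨i, hi, hnu⟩))))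
  · have hu3 : 3 ≤ u := by omega
    rcases Nat.lt_or_ge i 1 with hi0 | hi1
    · -- i = 0 : n = u odd composite
      have hi : i = 0 := by omega
      subst hi
      rw [pow_zero, one_mul] at hnu
      subst hnu
      by_cases hprime : n.Prime
      · exact absurd (Or.inl hprime) hl
      obtain ⟨p, hpdef⟩ : ∃ p, n.minFac = p := ⟨_, rfl⟩
      have hpp : p.Prime := hpdef ▸ Nat.minFac_prime (by omega)
      obtain ⟨k, hk⟩ : p ∣ n := hpdef ▸ Nat.minFac_dvd n
      have hk0 : 0 < k := Nat.pos_of_ne_zero (by rintro rfl; simp at hk; omega)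
      have hpo : p % 2 = 1 := by
        rcases hpp.eq_two_or_odd with h | h
        · exfalso; rw [h] at hk; omega
        · exact h
      apply icB hpp hpo (show n = k * p by rw [hk]; ring)
      by_contra hcon
      push_neg at hcon
      apply hl
      have hpsq : p ^ 2 = p * p := sq p
      have hk1 : k ≠ 1 := by
        rintro rfl
        rw [mul_one] at hk
        exact hprime (hk ▸ hpp)
      by_cases hkprime : k.Prime
      · by_cases hkp : k = p
        · -- n = p^2, p ≠ 3
          right; left
          refine ⟨p, hpp, ?_, by rw [hk, hkp]; exact (sq p).symm⟩
          intro h3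
          rw [h3] at hcon hkp
          norm_num at hcon
          omega
        · -- n = p * q, form (iii)
          have hpk : p ≤ k := by
            have h1 : n.minFac ≤ k := Nat.minFac_le_of_dvd hkprime.two_le ⟨p, by rw [hk]; ring⟩
            omega
          have h5 : 5 < p := by
            by_contra h5
            push_neg at h5
            have h6 : p * p ≤ 5 * p := Nat.mul_le_mul_right p h5
            omega
          exact Or.inr (Or.inr (Or.inl ⟨p, k, hpp, hkprime, h5, by omega, by omega, hk⟩))
      · -- k composite : k ≥ p^2
        have hq := Nat.minFac_prime hk1
        have hkf : k.minFac ^ 2 ≤ k := Nat.minFac_sq_le_self (by omega) hkprime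
        have hpk : p ≤ k.minFac := by
          have h1 : k.minFac ∣ n := dvd_trans (Nat.minFac_dvd k) ⟨p, by rw [hk]; ring⟩
          have h2 : n.minFac ≤ k.minFac := Nat.minFac_le_of_dvd hq.two_le h1
          omega
        have h3 : p ^ 2 ≤ k.minFac ^ 2 := Nat.pow_le_pow_left hpk 2
        omega
    · rcases Nat.lt_or_ge i 2 with hi1' | hi2
      · -- i = 1
        have hi : i = 1 := by omega
        subst hi
        have h4 : (2 : ℕ) ^ 2 = 4 := by norm_num
        exact icA1 (s := 2) (m := u) (by norm_num) (by norm_num) hu1 (by omega)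
          (by rw [hnu, pow_one]; ring)
      · -- i ≥ 2
        have h4i : 4 ≤ 2 ^ i := by
          calc (4 : ℕ) = 2 ^ 2 := by norm_num
          _ ≤ 2 ^ i := Nat.pow_le_pow_right (by norm_num) hi2
        have hie : (2 : ℕ) ^ i % 2 = 0 := by
          have : 2 ∣ 2 ^ i := dvd_pow_self 2 (by omega)
          omega
        obtain ⟨p, hpdef⟩ : ∃ p, u.minFac = p := ⟨_, rfl⟩
        have hpp : p.Prime := hpdef ▸ Nat.minFac_prime (by omega)
        obtain ⟨v, hv⟩ : p ∣ u := hpdef ▸ Nat.minFac_dvd u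
        have hv0 : 0 < v := Nat.pos_of_ne_zero (by rintro rfl; simp at hv; omega)
        have hpo : p % 2 = 1 := by
          rcases hpp.eq_two_or_odd with h | h
          · exfalso; rw [h] at hv; omega
          · exact h
        have he4 : (2:ℕ) ^ (i + 2) = 2 ^ i * 4 := by rw [pow_add]; norm_num
        by_cases hbig : p ^ 2 ≤ 2 ^ (i + 2) * v + 1
        · apply icB hpp hpo (show n = 2 ^ i * v * p by rw [hnu, hv]; ring)
          have he : 2 ^ (i + 2) * v = 4 * (2 ^ i * v) := by rw [he4]; ring
          omega
        · push_neg at hbig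
          have hppow : ((2 : ℕ) ^ i) ^ 2 = 2 ^ (2 * i) := by
            rw [← pow_mul, Nat.mul_comm]
          by_cases hv1 : v = 1
          · -- u = p prime
            subst hv1
            rw [mul_one] at hv
            have hnotv : ¬ (p < 2 ^ (2 * i) - 1) := by
              intro hlt
              apply hl
              refine Or.inr (Or.inr (Or.inr (Or.inr
                ⟨i, p, hi2, hpp, Nat.odd_iff.mpr hpo, by omega, hlt, by rw [hnu, hv]⟩)))
            push_neg at hnotv
            apply icA1 (s := 2 ^ i) (m := u) (by omega) hie hu1 ?_ (by rw [hnu]; ring)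
            rw [hppow]
            have h1 : 0 < 2 ^ (2 * i) := pow_pos (by norm_num) _
            omega
          · -- v > 1
            have hvp : p ≤ v := by
              have hq := Nat.minFac_prime hv1
              have h1 : v.minFac ∣ u := dvd_trans (Nat.minFac_dvd v) ⟨p, by rw [hv]; ring⟩
              have h2 : u.minFac ≤ v.minFac := Nat.minFac_le_of_dvd hq.two_le h1
              have h3 : v.minFac ≤ v := Nat.minFac_le (by omega)
              omega
            have hgt : 2 ^ (i + 2) < p := by
              by_contra hc
              push_neg at hc
              have h1 : p * p ≤ 2 ^ (i + 2) * v := Nat.mul_le_mul hc hvp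
              have h2 : p ^ 2 = p * p := sq p
              omega
            apply icA1 (s := 2 ^ i) (m := u) (by omega) hie hu1 ?_ (by rw [hnu]; ring)
            rw [hppow]
            have h1 : 2 ^ (i + 2) * 2 ^ (i + 2) < p * p := by nlinarith [hgt]
            have h2 : p * p ≤ p * v := Nat.mul_le_mul_left p hvp
            have h4 : 2 ^ (2 * i) ≤ 2 ^ (i + 2) * 2 ^ (i + 2) := by
              rw [← pow_add]
              exact Nat.pow_le_pow_right (by norm_num) (by omega)
            omega


lemma not_ic_of_list {n : ℕ} (hn : 1 < n)
    (hl : n.Prime ∨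
       (∃ p : ℕ, p.Prime ∧ p ≠ 3 ∧ n = p ^ 2) ∨
       (∃ p q : ℕ, p.Prime ∧ q.Prime ∧ 5 < p ∧ p < q ∧ 4 * q < p ^ 2 - 1 ∧ n = p * q) ∨
       (∃ i : ℕ, 1 ≤ i ∧ n = 2 ^ i) ∨
       (∃ i p : ℕ, 2 ≤ i ∧ p.Prime ∧ Odd p ∧ 2 ^ (i + 2) < p ^ 2 ∧ p < 2 ^ (2 * i) - 1 ∧
         n = 2 ^ i * p)) : ¬ ICongruent n := by
  intro hic
  rw [ic_iff] at hic
  obtain ⟨s, t, E, ht0, hts, hst, hpar, hE, hcase⟩ := hic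
  have q1 := sq_mod_two' s
  have q2 := sq_mod_two' t
  have hEodd : E % 2 = 1 := by omega
  have hsq : (t + 1) ^ 2 ≤ s ^ 2 := Nat.pow_le_pow_left (by omega) 2
  have hexp : (t + 1) ^ 2 = t ^ 2 + 2 * t + 1 := by ring
  have hEge : 3 ≤ E := by omega
  have hs2 : 2 ≤ s := by omega
  have hst2 : 2 ≤ s * t := by
    calc (2 : ℕ) = 2 * 1 := by norm_num
    _ ≤ s * t := Nat.mul_le_mul hs2 ht0
  rcases hl with hP | ⟨p, hp, hp3, hnp⟩ | ⟨p, q, hp, hq, hp5, hpq, hq4, hnpq⟩ |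
    ⟨i, hi1, hni⟩ | ⟨i, p, hi2, hp, hpodd, hv1, hv2, hnv⟩
  -- form (i) : n prime
  · rcases hcase with ⟨m, hm1, hm2, hm3⟩ | ⟨k, hk1, hk2⟩
    · rcases hP.eq_one_or_self_of_dvd m ⟨s * t, hm3⟩ with h1 | h1
      · omega
      · subst h1
        have h2 : m * (s * t) = m * 1 := by rw [mul_one, ← hm3]
        have h3 : s * t = 1 := Nat.eq_of_mul_eq_mul_left (by omega) h2
        omega
    · rcases hP.eq_one_or_self_of_dvd E ⟨k, by rw [hk2]; ring⟩ with h1 | h1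
      · omega
      · subst h1
        have h2 : 1 * E = k * E := by rw [one_mul]; exact hk2
        have h3 : 1 = k := Nat.eq_of_mul_eq_mul_right (by omega) h2
        omega
  -- form (ii) : n = p ^ 2
  · subst hnp
    have hp2 : 2 ≤ p := hp.two_le
    have hpsq : p ^ 2 = p * p := sq p
    rcases hcase with ⟨m, hm1, hm2, hm3⟩ | ⟨k, hk1, hk2⟩
    · rcases dvd_prime_sq hp ⟨s * t, hm3⟩ with h1 | h1 | h1
      · omega
      · subst h1
        have hstp : s * t = m := by
          apply Nat.eq_of_mul_eq_mul_left (show 0 < m by omega)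
          rw [← hm3, hpsq]
        obtain ⟨ht1, hsp⟩ := st_prime hp ht0 hts hstp
        rw [ht1, hsp] at hE
        have h3 : 2 * m ≤ m * m := Nat.mul_le_mul_right m hp2
        have h4 : (1 : ℕ) ^ 2 = 1 := one_pow 1
        have h5 : m ^ 2 = m * m := sq m
        omega
      · subst h1
        have h2 : p ^ 2 * (s * t) = p ^ 2 * 1 := by rw [mul_one, ← hm3]
        have h3 : s * t = 1 := Nat.eq_of_mul_eq_mul_left (by positivity) h2
        omega
    · rcases dvd_prime_sq (d := E) hp ⟨k, by rw [hk2]; ring⟩ with h1 | h1 | h1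
      · omega
      · -- E = p
        obtain ⟨hs1, hp2t⟩ := E_prime hp ht0 hts hE h1
        rw [h1] at hk2
        rw [hpsq] at hk2
        have hkp : k = p := Nat.eq_of_mul_eq_mul_right (by omega) hk2.symm
        have hstt : s * t = t * t + t := by rw [hs1]; ring
        rcases Nat.lt_or_ge t 2 with h2 | h2
        · have ht1 : t = 1 := by omega
          rw [ht1] at hp2t
          omega
        · have h6 : 2 * t ≤ t * t := Nat.mul_le_mul_right t h2
          omega
      · rw [h1] at hk2
        have h2 : 1 * p ^ 2 = k * p ^ 2 := by rw [one_mul]; exact hk2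
        have h3 : 1 = k := Nat.eq_of_mul_eq_mul_right (by positivity) h2
        omega
  -- form (iii) : n = p * q
  · subst hnpq
    have hq2 : 2 ≤ q := hq.two_le
    have hpsq : p ^ 2 = p * p := sq p
    have hqsq : q ^ 2 = q * q := sq q
    rcases hcase with ⟨m, hm1, hm2, hm3⟩ | ⟨k, hk1, hk2⟩
    · rcases dvd_prime_mul_prime hp hq ⟨s * t, hm3⟩ with h1 | h1 | h1 | h1
      · omega
      · -- m = p, s*t = q
        subst h1
        have hstq : s * t = q := by
          apply Nat.eq_of_mul_eq_mul_left (show 0 < m by omega)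
          rw [← hm3]
        obtain ⟨ht1, hsq'⟩ := st_prime hq ht0 hts hstq
        rw [ht1, hsq'] at hE
        have h3 : 2 * q ≤ q * q := Nat.mul_le_mul_right q hq2
        have h4 : (1 : ℕ) ^ 2 = 1 := one_pow 1
        omega
      · -- m = q, s*t = p
        subst h1
        have hstp : s * t = p := by
          apply Nat.eq_of_mul_eq_mul_left (show 0 < m by omega)
          rw [← hm3]; ring
        obtain ⟨ht1, hsp⟩ := st_prime hp ht0 hts hstp
        rw [ht1, hsp] at hE
        have h4 : (1 : ℕ) ^ 2 = 1 := one_pow 1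
        omega
      · subst h1
        have h2 : (p * q) * (s * t) = (p * q) * 1 := by rw [mul_one, ← hm3]
        have h3 : s * t = 1 := Nat.eq_of_mul_eq_mul_left (by positivity) h2
        omega
    · rcases dvd_prime_mul_prime (d := E) hp hq ⟨k, by rw [hk2]; ring⟩ with h1 | h1 | h1 | h1
      · omega
      · -- E = p, k = q
        obtain ⟨hs1, hp2t⟩ := E_prime hp ht0 hts hE h1
        rw [h1] at hk2
        have hkq : k = q := by
          apply Nat.eq_of_mul_eq_mul_right hp.pos
          rw [← hk2]; ring
        have hstt : s * t = t * (t + 1) := by rw [hs1]; ring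
        have hps : p ^ 2 = 4 * (t * (t + 1)) + 1 := by rw [hp2t]; ring
        omega
      · -- E = q, k = p
        obtain ⟨hs1, hq2t⟩ := E_prime hq ht0 hts hE h1
        rw [h1] at hk2
        have hkp : k = p := by
          apply Nat.eq_of_mul_eq_mul_right hq.pos
          rw [← hk2]
        have hstt : s * t = t * t + t := by rw [hs1]; ring
        rcases Nat.lt_or_ge t 2 with h2 | h2
        · have ht1 : t = 1 := by omega
          rw [ht1] at hq2t
          omega
        · have h6 : 2 * t ≤ t * t := Nat.mul_le_mul_right t h2
          omega
      · rw [h1] at hk2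
        have h2 : 1 * (p * q) = k * (p * q) := by rw [one_mul]; exact hk2
        have h3 : 1 = k := Nat.eq_of_mul_eq_mul_right (by positivity) h2
        omega
  -- form (iv) : n = 2 ^ i
  · subst hni
    rcases hcase with ⟨m, hm1, hm2, hm3⟩ | ⟨k, hk1, hk2⟩
    · have := odd_dvd_pow_two hm1 ⟨s * t, hm3⟩
      omega
    · have := odd_dvd_pow_two hEodd ⟨k, by rw [hk2]; ring⟩
      omega
  -- form (v) : n = 2 ^ i * p
  · subst hnv
    have hpo : p % 2 = 1 := Nat.odd_iff.mp hpodd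
    have h4i : 4 ≤ 2 ^ i := by
      calc (4 : ℕ) = 2 ^ 2 := by norm_num
      _ ≤ 2 ^ i := Nat.pow_le_pow_right (by norm_num) hi2
    have he4 : (2 : ℕ) ^ (i + 2) = 2 ^ i * 4 := by rw [pow_add]; norm_num
    rcases hcase with ⟨m, hm1, hm2, hm3⟩ | ⟨k, hk1, hk2⟩
    · have hmp : m ∣ p := odd_dvd_pow_two_mul hm1 ⟨s * t, hm3⟩
      rcases hp.eq_one_or_self_of_dvd m hmp with h1 | h1
      · omega
      · subst h1
        have hst2i : s * t = 2 ^ i := by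
          apply Nat.eq_of_mul_eq_mul_left (show 0 < m by omega)
          rw [← hm3]; ring
        have hts' : t ∣ 2 ^ i := ⟨s, by rw [← hst2i]; ring⟩
        have hto : t % 2 = 1 := by
          rcases Nat.mod_two_eq_zero_or_one t with h2 | h2
          · exfalso
            have hso : s % 2 = 1 := by omega
            have := odd_dvd_pow_two hso ⟨t, by rw [← hst2i]⟩
            omega
          · exact h2
        have ht1 : t = 1 := odd_dvd_pow_two hto hts'
        have hse : s = 2 ^ i := by rw [ht1, mul_one] at hst2i; exact hst2i
        have hppow : ((2 : ℕ) ^ i) ^ 2 = 2 ^ (2 * i) := by rw [← pow_mul, Nat.mul_comm]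
        rw [ht1, hse, hppow] at hE
        have h4 : (1 : ℕ) ^ 2 = 1 := one_pow 1
        omega
    · have hEp : E ∣ p := odd_dvd_pow_two_mul hEodd ⟨k, by rw [hk2]; ring⟩
      rcases hp.eq_one_or_self_of_dvd E hEp with h1 | h1
      · omega
      · obtain ⟨hs1, hp2t⟩ := E_prime hp ht0 hts hE h1
        rw [h1] at hk2
        have hk2i : k = 2 ^ i := by
          apply Nat.eq_of_mul_eq_mul_right hp.pos
          rw [← hk2]
        have hstt : s * t = t * (t + 1) := by rw [hs1]; ring
        have hps : p ^ 2 = 4 * (t * (t + 1)) + 1 := by rw [hp2t]; ring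
        have hT : t * (t + 1) = 2 ^ i := by omega
        rcases Nat.mod_two_eq_zero_or_one t with hte | hto
        · have h2 : t + 1 = 1 := odd_dvd_pow_two (by omega) ⟨t, by rw [← hT]; ring⟩
          omega
        · have ht1 : t = 1 := odd_dvd_pow_two hto ⟨t + 1, by rw [← hT]⟩
          rw [ht1] at hT
          omega

theorem not_icongruent_iff (n : ℕ) (hn : 1 < n) :
    ¬ ICongruent n ↔
      (n.Prime ∨
       (∃ p : ℕ, p.Prime ∧ p ≠ 3 ∧ n = p ^ 2) ∨
       (∃ p q : ℕ, p.Prime ∧ q.Prime ∧ 5 < p ∧ p < q ∧ 4 * q < p ^ 2 - 1 ∧ n = p * q) ∨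
       (∃ i : ℕ, 1 ≤ i ∧ n = 2 ^ i) ∨
       (∃ i p : ℕ, 2 ≤ i ∧ p.Prime ∧ Odd p ∧ 2 ^ (i + 2) < p ^ 2 ∧ p < 2 ^ (2 * i) - 1 ∧
         n = 2 ^ i * p)) := by
  constructor
  · intro hnic
    by_contra hl
    exact hnic (ic_of_not_list hn hl)
  · exact not_ic_of_list hn
end

section
/- Almost every positive integer is an i-congruent number: the set of i-congruent numbers has natural density 1, i.e. the quantity (1/N) * #{n : 1 ≤ n ≤ N, n is an i-congruent number} tends to 1 as N tends to infinity. -/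
open Filter

/-- The basic trapezoid construction: `(2t+1)·m` is i-congruent once `m ≥ t(t+1)`,
using the Pythagorean triple `(2t(t+1), 2t+1, 2t(t+1)+1)`. -/
lemma icongruent_construct (t m : ℕ) (ht : 1 ≤ t) (hm : t * (t + 1) ≤ m) :
    ICongruent ((2 * t + 1) * m) := by
  have hx : 1 ≤ t * (t + 1) := Nat.one_le_iff_ne_zero.mpr (by positivity)
  refine ⟨m + t * (t + 1), 2 * t + 1, 2 * (t * (t + 1)) + 1, m - t * (t + 1),
    by omega, by omega, by omega, by omega, ?_, ?_, ?_⟩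
  · have h2 : m + t * (t + 1) + (m - t * (t + 1)) = 2 * m := by omega
    rw [h2]; ring
  · have h1 : m + t * (t + 1) - (m - t * (t + 1)) = 2 * (t * (t + 1)) := by omega
    rw [h1]; ring
  · set b := 2 * t + 1 with hb
    set c := 2 * (t * (t + 1)) + 1 with hc
    have key : 2 * c = b * b + 1 := by rw [hb, hc]; ring
    have hg : Nat.gcd b c ∣ 1 := by
      have h1 : Nat.gcd b c ∣ 2 * c := Dvd.dvd.mul_left (Nat.gcd_dvd_right b c) 2
      have h2 : Nat.gcd b c ∣ b * b := Dvd.dvd.mul_left (Nat.gcd_dvd_left b c) b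
      have h3 : Nat.gcd b c ∣ 2 * c - b * b := Nat.dvd_sub h1 h2
      simpa [key] using h3
    exact Nat.dvd_one.mp hg

lemma icongruent_of_prime_dvd {p n : ℕ} (hp : p.Prime) (hp2 : p ≠ 2) (hdvd : p ∣ n)
    (hn : p ^ 3 ≤ n) : ICongruent n := by
  obtain ⟨m, rfl⟩ := hdvd
  obtain ⟨t, ht⟩ := hp.odd_of_ne_two hp2
  have hp3 : 3 ≤ p := by
    rcases hp.two_le.lt_or_eq with h | h
    · omega
    · omega
  have ht1 : 1 ≤ t := by omega
  have hm : p ^ 2 ≤ m := by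
    have : p * p ^ 2 ≤ p * m := by nlinarith [hn]
    exact Nat.le_of_mul_le_mul_left this hp.pos
  have htm : t * (t + 1) ≤ m := by nlinarith
  have hpt : p = 2 * t + 1 := by omega
  rw [hpt]
  exact icongruent_construct t m ht1 htm

open scoped Classical in
/-- The sieve bound: for a finite set `P` of odd primes with product `M`, all but at most
`M^3 + φ(M)·((N+1)/M + 1)` of the integers in `[1, N]` are i-congruent. -/
lemma icongruent_count_lower (P : Finset ℕ) (hP : ∀ p ∈ P, p.Prime ∧ p ≠ 2) (N : ℕ) :
    N ≤ ((Finset.Icc 1 N).filter (fun n => ICongruent n)).card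
        + (∏ p ∈ P, p) ^ 3 + (∏ p ∈ P, p).totient * ((N + 1) / (∏ p ∈ P, p) + 1) := by
  set M := ∏ p ∈ P, p with hMdef
  have hM : 0 < M := Finset.prod_pos fun p hp => (hP p hp).1.pos
  set B := (Finset.Icc 1 N).filter (fun n => M ^ 3 ≤ n ∧ ¬ M.Coprime n) with hBdef
  set C := (Finset.Icc 1 N).filter (fun n => ¬ (M ^ 3 ≤ n ∧ ¬ M.Coprime n)) with hCdef
  have hBsub : B ⊆ (Finset.Icc 1 N).filter (fun n => ICongruent n) := by
    apply Finset.monotone_filter_right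
    intro n _ hn
    obtain ⟨hn3, hncop⟩ := hn
    have hg1 : Nat.gcd M n ≠ 1 := hncop
    have hq : (Nat.gcd M n).minFac.Prime := Nat.minFac_prime hg1
    have hqM : (Nat.gcd M n).minFac ∣ M :=
      dvd_trans (Nat.minFac_dvd _) (Nat.gcd_dvd_left _ _)
    have hqn : (Nat.gcd M n).minFac ∣ n :=
      dvd_trans (Nat.minFac_dvd _) (Nat.gcd_dvd_right _ _)
    obtain ⟨p, hpP, hqp⟩ := hq.prime.exists_mem_finset_dvd hqM
    have hq2 : (Nat.gcd M n).minFac ≠ 2 := by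
      have : (Nat.gcd M n).minFac = p :=
        ((Nat.prime_dvd_prime_iff_eq hq (hP p hpP).1).mp hqp)
      rw [this]; exact (hP p hpP).2
    have hqle : (Nat.gcd M n).minFac ≤ M := Nat.le_of_dvd hM hqM
    exact icongruent_of_prime_dvd hq hq2 hqn
      (le_trans (Nat.pow_le_pow_left hqle 3) hn3)
  have h1 : B.card + C.card = N := by
    rw [hBdef, hCdef, Finset.card_filter_add_card_filter_not, Nat.card_Icc]; omega
  have h2 : C.card ≤ M ^ 3 + M.totient * ((N + 1) / M + 1) := by
    have hsub : C ⊆ Finset.range (M ^ 3) ∪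
        ((Finset.Ico 0 (0 + (N + 1))).filter (M.Coprime ·)) := by
      intro n hn
      rw [hCdef, Finset.mem_filter] at hn
      obtain ⟨hnI, hn2⟩ := hn
      rw [Finset.mem_Icc] at hnI
      rcases not_and_or.mp hn2 with h | h
      · exact Finset.mem_union_left _ (Finset.mem_range.mpr (by omega))
      · refine Finset.mem_union_right _ (Finset.mem_filter.mpr ⟨?_, not_not.mp h⟩)
        rw [Finset.mem_Ico]; omega
    calc C.card ≤ _ := Finset.card_le_card hsub
      _ ≤ (Finset.range (M ^ 3)).card +
          ((Finset.Ico 0 (0 + (N + 1))).filter (M.Coprime ·)).card := Finset.card_union_le _ _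
      _ ≤ M ^ 3 + M.totient * ((N + 1) / M + 1) := by
        rw [Finset.card_range]
        exact Nat.add_le_add_left (Nat.Ico_filter_coprime_le 0 (N + 1) hM.ne') _
  have h3 : B.card ≤ ((Finset.Icc 1 N).filter (fun n => ICongruent n)).card :=
    Finset.card_le_card hBsub
  omega

/-- The sum of reciprocals of odd primes is unbounded. -/
lemma exists_primes_sum_ge (L : ℝ) :
    ∃ K, L ≤ ∑ p ∈ (Finset.range K).filter (fun p => p.Prime ∧ p ≠ 2), (1 / p : ℝ) := by
  have h0 : ∀ n, 0 ≤ Set.indicator {p : ℕ | p.Prime} (fun n => (1 : ℝ) / n) n :=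
    fun n => Set.indicator_nonneg (fun a _ => by positivity) n
  have ht : Tendsto (fun K => ∑ n ∈ Finset.range K,
      Set.indicator {p : ℕ | p.Prime} (fun n => (1 : ℝ) / n) n) atTop atTop :=
    (not_summable_iff_tendsto_nat_atTop_of_nonneg h0).mp not_summable_one_div_on_primes
  obtain ⟨K, hK⟩ := (ht.eventually_ge_atTop (L + 1 / 2)).exists
  refine ⟨K, ?_⟩
  have heq : ∑ n ∈ Finset.range K, Set.indicator {p : ℕ | p.Prime} (fun n => (1 : ℝ) / n) n
      = ∑ p ∈ (Finset.range K).filter (fun p => p.Prime), (1 / p : ℝ) := by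
    rw [Finset.sum_filter]
    exact Finset.sum_congr rfl fun n _ => by simp [Set.indicator_apply]
  have hsplit := Finset.sum_filter_add_sum_filter_not
    ((Finset.range K).filter (fun p => p.Prime)) (fun p => p ≠ 2) (fun p => (1 / p : ℝ))
  have h2 : ∑ p ∈ ((Finset.range K).filter (fun p => p.Prime)).filter (fun p => ¬ p ≠ 2),
      (1 / p : ℝ) ≤ 1 / 2 := by
    have hsub : ((Finset.range K).filter (fun p => p.Prime)).filter (fun p => ¬ p ≠ 2)
        ⊆ {2} := by
      intro p hp
      simp only [Finset.mem_filter, not_not] at hp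
      simp [hp.2]
    calc _ ≤ ∑ p ∈ ({2} : Finset ℕ), (1 / p : ℝ) :=
          Finset.sum_le_sum_of_subset_of_nonneg hsub (fun p _ _ => by positivity)
      _ = 1 / 2 := by norm_num
  have h3 : ((Finset.range K).filter (fun p => p.Prime)).filter (fun p => p ≠ 2)
      = (Finset.range K).filter (fun p => p.Prime ∧ p ≠ 2) := by
    rw [Finset.filter_filter]
  rw [heq] at hK
  rw [← h3]
  linarith [hsplit]

/-- Euler product bound: `φ(M)/M ≤ exp(-∑ 1/p)` for `M` a product of distinct primes `P`. -/
lemma totient_div_le_exp (P : Finset ℕ) (hP : ∀ p ∈ P, p.Prime) :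
    ((∏ p ∈ P, p).totient : ℝ) / (∏ p ∈ P, p) ≤ Real.exp (-∑ p ∈ P, (1 / p : ℝ)) := by
  set M := ∏ p ∈ P, p with hMdef
  have hM : 0 < M := Finset.prod_pos fun p hp => (hP p hp).pos
  have hfac : M.primeFactors = P := Nat.primeFactors_prod hP
  have h1 : (M.totient : ℝ) = M * ∏ p ∈ P, (1 - (p : ℝ)⁻¹) := by
    have h := Nat.totient_eq_mul_prod_factors M
    rw [hfac] at h
    have h' := congrArg (fun q : ℚ => (q : ℝ)) h
    push_cast at h'
    exact h'
  rw [h1, mul_div_cancel_left₀ _ (by positivity : (M : ℝ) ≠ 0)]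
  calc ∏ p ∈ P, (1 - (p : ℝ)⁻¹) ≤ ∏ p ∈ P, Real.exp (-(1 / p)) := by
        apply Finset.prod_le_prod
        · intro p hp
          have h2 : (2 : ℝ) ≤ p := by exact_mod_cast (hP p hp).two_le
          have : (p : ℝ)⁻¹ ≤ 1 := by
            rw [inv_le_one_iff₀]; right; linarith
          linarith
        · intro p hp
          have := Real.add_one_le_exp (-(1 / p : ℝ))
          have hop : (p : ℝ)⁻¹ = 1 / p := (one_div _).symm
          linarith
    _ = Real.exp (∑ p ∈ P, -(1 / p : ℝ)) := (Real.exp_sum _ _).symm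
    _ = Real.exp (-∑ p ∈ P, (1 / p : ℝ)) := by rw [Finset.sum_neg_distrib]

open scoped Classical in
/-- Almost every positive integer is an i-congruent number: the i-congruent numbers have
natural density 1. -/
theorem icongruent_density_one :
    Filter.Tendsto
      (fun N : ℕ => (((Finset.Icc 1 N).filter fun n => ICongruent n).card : ℝ) / (N : ℝ))
      Filter.atTop (nhds 1) := by
  rw [tendsto_order]
  constructor
  · -- lower bound
    intro b hb
    have hb1 : 0 < 1 - b := by linarith
    obtain ⟨K, hK⟩ := exists_primes_sum_ge (Real.log (1 - b)⁻¹ + 1)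
    set P := (Finset.range K).filter (fun p => p.Prime ∧ p ≠ 2) with hPdef
    have hP : ∀ p ∈ P, p.Prime ∧ p ≠ 2 := fun p hp => (Finset.mem_filter.mp hp).2
    set M := ∏ p ∈ P, p with hMdef
    have hM : 0 < M := Finset.prod_pos fun p hp => (hP p hp).1.pos
    set q : ℝ := (M.totient : ℝ) / M with hqdef
    have hq0 : 0 ≤ q := by positivity
    have hqb : q < 1 - b := by
      have h1 : q ≤ Real.exp (-∑ p ∈ P, (1 / p : ℝ)) :=
        totient_div_le_exp P (fun p hp => (hP p hp).1)
      have h2 : Real.exp (-∑ p ∈ P, (1 / p : ℝ)) < 1 - b := by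
        rw [← Real.lt_log_iff_exp_lt hb1]
        have hli : Real.log ((1 - b)⁻¹) = - Real.log (1 - b) := Real.log_inv _
        linarith
      linarith
    -- the auxiliary lower-bound function
    set g : ℕ → ℝ := fun N =>
      1 - ((M ^ 3 + M.totient : ℕ) : ℝ) / N - q * (((N : ℝ) + 1) / N) with hgdef
    have hg : Tendsto g atTop (nhds (1 - 0 - q * 1)) := by
      apply Tendsto.sub
      apply Tendsto.sub tendsto_const_nhds
      · exact tendsto_const_div_atTop_nhds_zero_nat _
      · apply Tendsto.const_mul
        have heq : ∀ᶠ N : ℕ in atTop, 1 + 1 / (N : ℝ) = ((N : ℝ) + 1) / N := by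
          filter_upwards [eventually_ge_atTop 1] with N hN
          have : (N : ℝ) ≠ 0 := by positivity
          field_simp
        refine Tendsto.congr' heq ?_
        have : Tendsto (fun N : ℕ => 1 + 1 / (N : ℝ)) atTop (nhds (1 + 0)) :=
          tendsto_const_nhds.add tendsto_one_div_atTop_nhds_zero_nat
        simpa using this
    have hgb : ∀ᶠ N : ℕ in atTop, b < g N := by
      apply hg.eventually
      apply eventually_gt_nhds
      simp only [sub_zero, mul_one]
      linarith
    filter_upwards [hgb, eventually_ge_atTop 1] with N hN1 hN2
    have hNpos : (0 : ℝ) < N := by exact_mod_cast hN2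
    refine lt_of_lt_of_le hN1 ?_
    -- g N ≤ card / N
    rw [hgdef]
    rw [le_div_iff₀ hNpos]
    have hnat := icongruent_count_lower P hP N
    have hcast : (N : ℝ) ≤ (((Finset.Icc 1 N).filter (fun n => ICongruent n)).card : ℝ)
        + (M : ℝ) ^ 3 + (M.totient : ℝ) * ((((N + 1) / M : ℕ) : ℝ) + 1) := by
      exact_mod_cast hnat
    have hdivle : (((N + 1) / M : ℕ) : ℝ) ≤ ((N : ℝ) + 1) / M := by
      have := Nat.cast_div_le (α := ℝ) (m := N + 1) (n := M)
      push_cast at this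
      exact this
    have htot : (M.totient : ℝ) * (((N : ℝ) + 1) / M) = q * ((N : ℝ) + 1) := by
      rw [hqdef]; field_simp
    have htotnn : (0 : ℝ) ≤ (M.totient : ℝ) := by positivity
    have hkey : (N : ℝ) ≤ (((Finset.Icc 1 N).filter (fun n => ICongruent n)).card : ℝ)
        + (M : ℝ) ^ 3 + (M.totient : ℝ) + q * ((N : ℝ) + 1) := by
      have h5 : (M.totient : ℝ) * ((((N + 1) / M : ℕ) : ℝ) + 1)
          ≤ q * ((N : ℝ) + 1) + (M.totient : ℝ) := by
        have h6 := mul_le_mul_of_nonneg_left hdivle htotnn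
        rw [mul_add, mul_one]
        linarith [h6, htot.le, htot.ge]
      linarith
    have hNe : (N : ℝ) ≠ 0 := ne_of_gt hNpos
    have hexp : (1 - ((M ^ 3 + M.totient : ℕ) : ℝ) / N - q * (((N : ℝ) + 1) / N)) * N
        = (N : ℝ) - ((M : ℝ) ^ 3 + (M.totient : ℝ)) - q * ((N : ℝ) + 1) := by
      push_cast
      field_simp
    rw [hexp]
    linarith
  · -- upper bound
    intro b hb
    filter_upwards [eventually_ge_atTop 1] with N hN
    have hNpos : (0 : ℝ) < N := by exact_mod_cast hN
    have hcard : (((Finset.Icc 1 N).filter fun n => ICongruent n).card : ℝ) ≤ N := by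
      have h1 : ((Finset.Icc 1 N).filter fun n => ICongruent n).card ≤ N := by
        calc _ ≤ (Finset.Icc 1 N).card := Finset.card_filter_le _ _
          _ = N := by rw [Nat.card_Icc]; omega
      exact_mod_cast h1
    calc _ ≤ (1 : ℝ) := by rw [div_le_one hNpos]; exact hcard
      _ < b := hb
end

section
/- For every positive integer m, there exist infinitely many positive integers n such that there are at least m distinct quadruples (a, b, c, d) of positive integers a, b, c and nonnegative integer d with a > d, 2n = (a + d)*b, (a - d)^2 + b^2 = c^2, and gcd(b, c) = 1; that is, infinitely many n that are the common area of at least m distinct right trapezoids of this kind. -/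
/-- The set of right trapezoids (quadruples `(a, b, c, d)`) with integer sides,
parallel sides `a > d ≥ 0`, height `b`, slant side `c`, `gcd b c = 1`, and area `n`. -/
def trapezoidsOfArea (n : ℕ) : Set (ℕ × ℕ × ℕ × ℕ) :=
  {q | 0 < q.1 ∧ 0 < q.2.1 ∧ 0 < q.2.2.1 ∧ q.2.2.2 < q.1 ∧
    2 * n = (q.1 + q.2.2.2) * q.2.1 ∧
    (q.1 - q.2.2.2) ^ 2 + q.2.1 ^ 2 = q.2.2.1 ^ 2 ∧
    Nat.gcd q.2.1 q.2.2.1 = 1}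

lemma trapezoidsOfArea_finite (n : ℕ) (hn : 0 < n) : (trapezoidsOfArea n).Finite := by
  apply Set.Finite.subset (Set.finite_Iic ((2*n, 2*n, 3*n, 2*n) : ℕ×ℕ×ℕ×ℕ))
  rintro ⟨a, b, c, d⟩ ⟨ha, hb, hc, hda, harea, hpyth, -⟩
  simp only [Set.mem_setOf_eq] at *
  have hab : a ≤ 2*n := by nlinarith
  have hbb : b ≤ 2*n := by nlinarith
  have hcb : c ≤ 3*n := by nlinarith [Nat.sub_le a d]
  simp only [Set.mem_Iic, Prod.mk_le_mk]
  exact ⟨hab, hbb, hcb, by omega⟩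

lemma gcd_aux (t : ℕ) : Nat.gcd (2*t+1) (2*t^2+2*t+1) = 1 := by
  have h1 : 2*t^2+2*t+1 = (t+1) + t*(2*t+1) := by ring
  rw [h1, Nat.gcd_add_mul_right_right]
  have h2 : 2*t+1 = t + 1*(t+1) := by ring
  rw [h2, Nat.gcd_add_mul_right_left]
  simp

/-- For every `m` there are infinitely many positive integers `n` that are the common area
of at least `m` distinct right trapezoids of this kind. -/
theorem infinitely_many_with_many_trapezoids (m : ℕ) (hm : 0 < m) :
    {n : ℕ | 0 < n ∧ m ≤ (trapezoidsOfArea n).ncard}.Infinite := by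
  set L := (2*m+1).factorial with hLdef
  have hLpos : 0 < L := Nat.factorial_pos _
  set C := m^2 + m + 1 with hCdef
  apply Set.infinite_of_injective_forall_mem (f := fun K : ℕ => (K + C) * L)
  case hi =>
    intro x y h
    simp only at h
    have := Nat.eq_of_mul_eq_mul_right hLpos h
    omega
  case hf =>
    intro K
    set n := (K + C) * L with hndef
    have hn : 0 < n := Nat.mul_pos (by omega) hLpos
    refine ⟨hn, ?_⟩
    -- the quadruple for each t
    set q : ℕ → ℕ × ℕ × ℕ × ℕ :=
      fun t => (n/(2*t+1) + t*(t+1), 2*t+1, 2*t^2+2*t+1, n/(2*t+1) - t*(t+1)) with hq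
    have hmem : ∀ t ∈ Finset.Icc 1 m, q t ∈ trapezoidsOfArea n := by
      intro t ht
      simp only [Finset.mem_Icc] at ht
      have hdvdL : (2*t+1) ∣ L := Nat.dvd_factorial (by omega) (by omega)
      have hdvd : (2*t+1) ∣ n := Dvd.dvd.mul_left hdvdL _
      simp only [hq, trapezoidsOfArea, Set.mem_setOf_eq]
      set k := n / (2*t+1) with hkdef
      have hk : n = (2*t+1) * k := (Nat.mul_div_cancel' hdvd).symm
      have hCk : C ≤ k := by
        have h1 : C * (2*t+1) ≤ n := by
          calc C * (2*t+1) ≤ C * L := Nat.mul_le_mul_left C (Nat.le_of_dvd hLpos hdvdL)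
          _ ≤ (K + C) * L := Nat.mul_le_mul_right L (by omega)
        exact (Nat.le_div_iff_mul_le (by omega)).2 h1
      have htk : t*(t+1) < k := by nlinarith
      have ht0 : 0 < t*(t+1) := Nat.mul_pos (by omega) (by omega)
      refine ⟨by omega, by omega, by omega, by omega, ?_, ?_, ?_⟩
      · have h2 : k + t*(t+1) + (k - t*(t+1)) = 2*k := by omega
        rw [h2]; nlinarith
      · have h2 : k + t*(t+1) - (k - t*(t+1)) = 2*(t*(t+1)) := by omega
        rw [h2]; ring
      · exact gcd_aux t
    have hinj : Set.InjOn q (Finset.Icc 1 m : Set ℕ) := by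
      intro x _ y _ h
      have := congrArg (fun p => p.2.1) h
      simp only [hq] at this
      omega
    have hfin := trapezoidsOfArea_finite n hn
    have hsub : ↑((Finset.Icc 1 m).image q) ⊆ trapezoidsOfArea n := by
      intro x hx
      rw [Finset.mem_coe, Finset.mem_image] at hx
      obtain ⟨t, ht, rfl⟩ := hx
      exact hmem t ht
    calc m = ((Finset.Icc 1 m).image q).card := by
            rw [Finset.card_image_of_injOn (by simpa using hinj), Nat.card_Icc]; omega
      _ = (((Finset.Icc 1 m).image q : Finset _) : Set _).ncard := (Set.ncard_coe_finset _).symm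
      _ ≤ (trapezoidsOfArea n).ncard := Set.ncard_le_ncard hsub hfin
end

section
/- Every integer n ≥ 2 is an n-congruent number, i.e. for every integer n ≥ 2 there exist positive rational numbers a, b, c, d with a = n*d, 2n = (a + d)*b, and (a - d)^2 + b^2 = c^2. -/
/-- For a positive integer `k`, a positive integer `n` is a *k-congruent number* if it is the
area of a right trapezoid with positive rational parallel sides `a = k * d` and `d`,
height `b` and slant side `c`. -/
def KCongruent (k n : ℕ) : Prop :=
  ∃ a b c d : ℚ, 0 < a ∧ 0 < b ∧ 0 < c ∧ 0 < d ∧ a = (k : ℚ) * d ∧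
    2 * (n : ℚ) = (a + d) * b ∧ (a - d) ^ 2 + b ^ 2 = c ^ 2

theorem n_congruent_self (n : ℕ) (hn : 2 ≤ n) : KCongruent n n := by
  have hn0 : (0:ℚ) < (n:ℚ) := by exact_mod_cast Nat.lt_of_lt_of_le (by norm_num) hn
  have hn1 : (0:ℚ) < (n:ℚ) + 1 := by linarith
  refine ⟨(n:ℚ), 2 * n / (n + 1), ((n:ℚ)^2 + 1) / (n + 1), 1, hn0, ?_, ?_, one_pos,
    by ring, ?_, ?_⟩
  · positivity
  · positivity
  · field_simp
  · field_simp
    ring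
end

section
/- For every positive integer n and every integer k ≥ 2, the integer n is a k-congruent number if and only if (k^2 - 1)*n is a congruent number (i.e. the area of a right triangle with positive rational sides). -/
/-- A positive rational number `m` is a *congruent number* if it is the area of a right
triangle with positive rational sides. -/
def IsCongruentNumber (m : ℚ) : Prop :=
  ∃ p q r : ℚ, 0 < p ∧ 0 < q ∧ 0 < r ∧ p ^ 2 + q ^ 2 = r ^ 2 ∧ p * q = 2 * m

theorem k_congruent_iff_congruent (n k : ℕ) (hn : 0 < n) (hk : 2 ≤ k) :
    KCongruent k n ↔ IsCongruentNumber (((k : ℚ) ^ 2 - 1) * (n : ℚ)) := by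
  have hk' : (2 : ℚ) ≤ (k : ℚ) := by exact_mod_cast hk
  have hk1 : (0 : ℚ) < (k : ℚ) - 1 := by linarith
  have hk2 : (0 : ℚ) < (k : ℚ) + 1 := by linarith
  constructor
  · rintro ⟨a, b, c, d, ha, hb, hc, hd, hak, harea, hpyth⟩
    subst hak
    refine ⟨((k : ℚ) + 1) * ((k : ℚ) * d - d), ((k : ℚ) + 1) * b, ((k : ℚ) + 1) * c,
      ?_, by positivity, by positivity, ?_, ?_⟩
    · have : (0 : ℚ) < (k : ℚ) * d - d := by nlinarith
      positivity
    · linear_combination ((k : ℚ) + 1) ^ 2 * hpyth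
    · linear_combination (-(k : ℚ) ^ 2 + 1) * harea
  · rintro ⟨p, q, r, hp, hq, hr, hpyth, hpq⟩
    have h1 : ((k : ℚ) + 1) ≠ 0 := ne_of_gt hk2
    have h2 : ((k : ℚ) - 1) ≠ 0 := ne_of_gt hk1
    refine ⟨(k : ℚ) * (p / (((k : ℚ) + 1) * ((k : ℚ) - 1))), q / ((k : ℚ) + 1),
      r / ((k : ℚ) + 1), p / (((k : ℚ) + 1) * ((k : ℚ) - 1)),
      ?_, by positivity, by positivity, by positivity, rfl, ?_, ?_⟩
    · have hk0 : (0 : ℚ) < (k : ℚ) := by linarith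
      positivity
    · field_simp
      linear_combination (-1 : ℚ) * hpq
    · field_simp
      linear_combination hpyth
end

section
/- For every integer n ≥ 2, the integer n is a k-congruent number for each of the three distinct values k = n, k = 8n - 3, and k = 8n + 3. -/
theorem three_k_values (n : ℕ) (hn : 2 ≤ n) :
    KCongruent n n ∧ KCongruent (8 * n - 3) n ∧ KCongruent (8 * n + 3) n := by
  set N : ℚ := (n : ℚ) with hNdef
  have hN : (2 : ℚ) ≤ N := by rw [hNdef]; exact_mod_cast hn
  have hN0 : (0 : ℚ) < N := by linarith
  have h1 : (0 : ℚ) < N + 1 := by linarith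
  have h2 : (0 : ℚ) < 8 * N - 4 := by linarith
  have h3 : (0 : ℚ) < 4 * N - 1 := by linarith
  have h4 : (0 : ℚ) < 2 * N + 1 := by linarith
  have hcast : ((8 * n - 3 : ℕ) : ℚ) = 8 * N - 3 := by
    have h : 3 ≤ 8 * n := by omega
    push_cast [Nat.cast_sub h]
    ring
  refine ⟨?_, ?_, ?_⟩
  · exact ⟨N, 2 * N / (N + 1), (N ^ 2 + 1) / (N + 1), 1, hN0,
      by positivity, by positivity, one_pos,
      by rw [← hNdef]; ring,
      by field_simp; exact hNdef.symm,
      by field_simp; ring⟩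
  · refine ⟨(8 * N - 3) / (8 * N - 4), 4 * N * (2 * N - 1) / (4 * N - 1),
      (8 * N ^ 2 - 4 * N + 1) / (4 * N - 1), 1 / (8 * N - 4),
      div_pos (by linarith) h2, ?_, div_pos (by nlinarith) h3, by positivity, ?_, ?_, ?_⟩
    · have : (0:ℚ) < 2 * N - 1 := by linarith
      positivity
    · rw [hcast]; field_simp
    · rw [← hNdef]; rw [← add_div, div_mul_div_comm, eq_div_iff (mul_pos h2 h3).ne']; ring
    · rw [div_sub_div_same, div_pow, div_pow, div_pow, div_add_div _ _ (by positivity) (by positivity), div_eq_div_iff (by positivity) (by positivity)]; ring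
  · refine ⟨(8 * N + 3) / (4 * (2 * N + 1)), 2 * N,
      (8 * N ^ 2 + 4 * N + 1) / (2 * (2 * N + 1)), 1 / (4 * (2 * N + 1)),
      by positivity, by positivity, by positivity, by positivity, ?_, ?_, ?_⟩
    · push_cast; rw [← hNdef]; field_simp
    · rw [← hNdef]; field_simp; ring
    · field_simp; ring
end

section
/- For every integer k ≥ 2, the integer n = k^2 + 1 is a k-congruent number. -/
theorem k_sq_add_one_k_congruent (k : ℕ) (hk : 2 ≤ k) : KCongruent k (k ^ 2 + 1) := by
  set K : ℚ := (k : ℚ) with hK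
  have hK2 : (2 : ℚ) ≤ K := by rw [hK]; exact_mod_cast hk
  have hKpos : 0 < K := by linarith
  have hK1 : 0 < K + 1 := by linarith
  refine ⟨K ^ 2 + 1, 2 * K / (K + 1), (K ^ 4 + 1) / (K * (K + 1)), (K ^ 2 + 1) / K,
    by positivity, by positivity, by positivity, by positivity, ?_, ?_, ?_⟩
  · field_simp
    exact hK
  · push_cast
    field_simp
    ring
  · field_simp
    ring
end

section
/- For every positive integer u, there exist infinitely many positive integers k such that u^2 is a k-congruent number. -/
lemma kcong_of_pell (u : ℕ) (hu : 0 < u) (K M : ℕ)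
    (hpell : (K : ℚ) ^ 2 - 15 * (M : ℚ) ^ 2 = 1) (hM : 0 < M) (hK : 4 ≤ K) :
    KCongruent K (u ^ 2) := by
  have hu' : (0 : ℚ) < (u : ℚ) := by exact_mod_cast hu
  have hM' : (0 : ℚ) < (M : ℚ) := by exact_mod_cast hM
  have hK' : (4 : ℚ) ≤ (K : ℚ) := by exact_mod_cast hK
  set t : ℚ := (u : ℚ) * ((K : ℚ) - 1) / (30 * M) with ht
  have ht0 : 0 < t := by
    apply div_pos (mul_pos hu' (by linarith)) (by positivity)
  have hK1 : (0 : ℚ) < (K : ℚ) + 1 := by linarith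
  -- key: 60 * t^2 * (K+1) = u^2 * (K-1)
  have hkey : 60 * t ^ 2 * ((K : ℚ) + 1) = (u : ℚ) ^ 2 * ((K : ℚ) - 1) := by
    rw [ht]
    field_simp
    nlinarith [hpell]
  refine ⟨(u : ℚ) ^ 2 / (15 * t) + 4 * t, 15 * t, 17 * t,
    (u : ℚ) ^ 2 / (15 * t) - 4 * t, ?_, by positivity, by positivity, ?_, ?_, ?_, ?_⟩
  · positivity
  · -- d > 0 : u^2 - 60 t^2 > 0
    have h60 : 60 * t ^ 2 < (u : ℚ) ^ 2 := by
      nlinarith [hkey, sq_nonneg t]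
    rw [sub_pos, lt_div_iff₀ (by positivity)]
    nlinarith
  · -- a = K * d
    have h15 : (15 : ℚ) * t ≠ 0 := by positivity
    field_simp
    nlinarith [hkey]
  · push_cast
    field_simp
    ring
  · ring

theorem square_k_congruent_infinitely_many_k (u : ℕ) (hu : 0 < u) :
    {k : ℕ | 0 < k ∧ KCongruent k (u ^ 2)}.Infinite := by
  have h4 : 1 < 4 := by norm_num
  apply Set.infinite_of_injective_forall_mem
    (f := fun n : ℕ => Pell.xn h4 (n + 1))
  · intro m n hmn
    have := (Pell.strictMono_x h4).injective hmn
    omega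
  · intro n
    set K := Pell.xn h4 (n + 1) with hKdef
    set M := Pell.yn h4 (n + 1) with hMdef
    have hpz : (K : ℤ) * K - 15 * M * M = 1 := Pell.pell_eqz h4 (n + 1)
    have hpz2 : (K : ℤ) ^ 2 - 15 * (M : ℤ) ^ 2 = 1 := by ring_nf; ring_nf at hpz; linarith
    have hpell : (K : ℚ) ^ 2 - 15 * (M : ℚ) ^ 2 = 1 := by exact_mod_cast hpz2
    have hM : 0 < M := by
      have h := Pell.strictMono_y h4 (Nat.succ_pos n)
      rwa [Pell.yn_zero] at h
    have hK : 4 ≤ K := by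
      have h := (Pell.strictMono_x h4).monotone (Nat.succ_le_succ (Nat.zero_le n))
      rwa [Pell.xn_one] at h
    exact ⟨by omega, kcong_of_pell u hu K M hpell hM hK⟩
end

section
/- For every positive integer n, there exists a nonnegative integer d such that n is a d-congruent number. -/
/-- For a nonnegative integer `d`, a positive integer `n` is a *d-congruent number* if there
exist positive rationals `a`, `b`, `c` with `2 n = (a + 2 d) * b` and `a² + b² = c²`
(`n` is the area of a right trapezoid with parallel sides `a` and `a + 2 d`, height `b`
and slant side `c`). -/
def DCongruent (d n : ℕ) : Prop :=
  ∃ a b c : ℚ, 0 < a ∧ 0 < b ∧ 0 < c ∧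
    2 * (n : ℚ) = (a + 2 * (d : ℚ)) * b ∧ a ^ 2 + b ^ 2 = c ^ 2

theorem exists_d_congruent (n : ℕ) (hn : 0 < n) : ∃ d : ℕ, DCongruent d n := by
  rcases Nat.even_or_odd n with ⟨k, hk⟩ | ⟨k, hk⟩
  · -- n = 2k, k ≥ 1
    have hk1 : 1 ≤ k := by omega
    have hkq : (1 : ℚ) ≤ (k : ℚ) := by exact_mod_cast hk1
    have hpos : (0 : ℚ) < 4 * (k : ℚ) ^ 2 - 1 := by nlinarith
    refine ⟨2 * k ^ 2 - 1, 1, 4 * k / (4 * (k : ℚ) ^ 2 - 1),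
      (4 * (k : ℚ) ^ 2 + 1) / (4 * (k : ℚ) ^ 2 - 1), one_pos, ?_, ?_, ?_, ?_⟩
    · positivity
    · positivity
    · have hd : ((2 * k ^ 2 - 1 : ℕ) : ℚ) = 2 * (k : ℚ) ^ 2 - 1 := by
        have : 1 ≤ 2 * k ^ 2 := by nlinarith
        push_cast [Nat.cast_sub this]; ring
      have hnq : (n : ℚ) = 2 * (k : ℚ) := by rw [hk]; push_cast; ring
      rw [hd, hnq]
      rw [show (1 : ℚ) + 2 * (2 * (k : ℚ) ^ 2 - 1) = 4 * (k : ℚ) ^ 2 - 1 by ring, eq_comm, mul_div_assoc', div_eq_iff hpos.ne']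
      ring
    · field_simp
      ring
  · -- n = 2k + 1
    rcases Nat.eq_zero_or_pos k with rfl | hk1
    · -- n = 1
      refine ⟨2, 8/15, 15/34, 353/510, by norm_num, by norm_num, by norm_num, ?_, ?_⟩
      · rw [hk]; norm_num
      · norm_num
    · have hkq : (1 : ℚ) ≤ (k : ℚ) := by exact_mod_cast hk1
      have hpos : (0 : ℚ) < (k : ℚ) ^ 2 + (k : ℚ) := by nlinarith
      refine ⟨k ^ 2 + k - 1, 2, (2 * k + 1) / ((k : ℚ) ^ 2 + (k : ℚ)),
        (2 * (k : ℚ) ^ 2 + 2 * (k : ℚ) + 1) / ((k : ℚ) ^ 2 + (k : ℚ)),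
        by norm_num, ?_, ?_, ?_, ?_⟩
      · positivity
      · positivity
      · have hd : ((k ^ 2 + k - 1 : ℕ) : ℚ) = (k : ℚ) ^ 2 + (k : ℚ) - 1 := by
          have : 1 ≤ k ^ 2 + k := by nlinarith
          push_cast [Nat.cast_sub this]; ring
        have hnq : (n : ℚ) = 2 * (k : ℚ) + 1 := by rw [hk]; push_cast; ring
        rw [hd, hnq]
        field_simp
        ring
      · field_simp
        ring
end

section
/- For every positive integer n, define the rational numbers a = (729n^3 - 81n^2 + 27n + 1)*(9n - 1) / (6*(1 + 81n^2)), b = 12n*(1 + 81n^2) / ((1 + 9n)*(729n^3 + 81n^2 + 27n - 1)), and c = (43046721n^8 + 2125764n^6 + 39366n^4 + 1620n^2 + 1) / (6*(1 + 81n^2)*(1 + 9n)*(729n^3 + 81n^2 + 27n - 1)). Then a, b, c are positive rational numbers satisfying a^2 + b^2 = c^2 and 2n = (a + 6n)*b; in particular, every positive integer n is a 3n-congruent number. -/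
theorem three_n_congruent (n : ℕ) (hn : 0 < n) :
    (0 : ℚ) < (729 * (n : ℚ) ^ 3 - 81 * (n : ℚ) ^ 2 + 27 * (n : ℚ) + 1) * (9 * (n : ℚ) - 1) /
        (6 * (1 + 81 * (n : ℚ) ^ 2)) ∧
    (0 : ℚ) < 12 * (n : ℚ) * (1 + 81 * (n : ℚ) ^ 2) /
        ((1 + 9 * (n : ℚ)) * (729 * (n : ℚ) ^ 3 + 81 * (n : ℚ) ^ 2 + 27 * (n : ℚ) - 1)) ∧
    (0 : ℚ) < (43046721 * (n : ℚ) ^ 8 + 2125764 * (n : ℚ) ^ 6 + 39366 * (n : ℚ) ^ 4 +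
          1620 * (n : ℚ) ^ 2 + 1) /
        (6 * (1 + 81 * (n : ℚ) ^ 2) * (1 + 9 * (n : ℚ)) *
          (729 * (n : ℚ) ^ 3 + 81 * (n : ℚ) ^ 2 + 27 * (n : ℚ) - 1)) ∧
    ((729 * (n : ℚ) ^ 3 - 81 * (n : ℚ) ^ 2 + 27 * (n : ℚ) + 1) * (9 * (n : ℚ) - 1) /
          (6 * (1 + 81 * (n : ℚ) ^ 2))) ^ 2 +
      (12 * (n : ℚ) * (1 + 81 * (n : ℚ) ^ 2) /
          ((1 + 9 * (n : ℚ)) * (729 * (n : ℚ) ^ 3 + 81 * (n : ℚ) ^ 2 + 27 * (n : ℚ) - 1))) ^ 2 =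
      ((43046721 * (n : ℚ) ^ 8 + 2125764 * (n : ℚ) ^ 6 + 39366 * (n : ℚ) ^ 4 +
            1620 * (n : ℚ) ^ 2 + 1) /
          (6 * (1 + 81 * (n : ℚ) ^ 2) * (1 + 9 * (n : ℚ)) *
            (729 * (n : ℚ) ^ 3 + 81 * (n : ℚ) ^ 2 + 27 * (n : ℚ) - 1))) ^ 2 ∧
    2 * (n : ℚ) =
      ((729 * (n : ℚ) ^ 3 - 81 * (n : ℚ) ^ 2 + 27 * (n : ℚ) + 1) * (9 * (n : ℚ) - 1) /
            (6 * (1 + 81 * (n : ℚ) ^ 2)) + 6 * (n : ℚ)) *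
        (12 * (n : ℚ) * (1 + 81 * (n : ℚ) ^ 2) /
          ((1 + 9 * (n : ℚ)) * (729 * (n : ℚ) ^ 3 + 81 * (n : ℚ) ^ 2 + 27 * (n : ℚ) - 1))) ∧
    DCongruent (3 * n) n := by
  have hx : (1:ℚ) ≤ (n:ℚ) := by exact_mod_cast hn
  have h1 : (0:ℚ) < 1 + 81 * (n:ℚ)^2 := by positivity
  have h2 : (0:ℚ) < 1 + 9 * (n:ℚ) := by positivity
  have h3 : (0:ℚ) < 729 * (n:ℚ)^3 + 81 * (n:ℚ)^2 + 27 * (n:ℚ) - 1 := by nlinarith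
  have h4 : (0:ℚ) < 729 * (n:ℚ)^3 - 81 * (n:ℚ)^2 + 27 * (n:ℚ) + 1 := by nlinarith
  have h5 : (0:ℚ) < 9 * (n:ℚ) - 1 := by linarith
  have h6 : (0:ℚ) < (n:ℚ) := by linarith
  have ha : (0:ℚ) < (729 * (n : ℚ) ^ 3 - 81 * (n : ℚ) ^ 2 + 27 * (n : ℚ) + 1) * (9 * (n : ℚ) - 1) /
        (6 * (1 + 81 * (n : ℚ) ^ 2)) := by positivity
  have hb : (0:ℚ) < 12 * (n : ℚ) * (1 + 81 * (n : ℚ) ^ 2) /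
        ((1 + 9 * (n : ℚ)) * (729 * (n : ℚ) ^ 3 + 81 * (n : ℚ) ^ 2 + 27 * (n : ℚ) - 1)) := by
    positivity
  have hc : (0:ℚ) < (43046721 * (n : ℚ) ^ 8 + 2125764 * (n : ℚ) ^ 6 + 39366 * (n : ℚ) ^ 4 +
          1620 * (n : ℚ) ^ 2 + 1) /
        (6 * (1 + 81 * (n : ℚ) ^ 2) * (1 + 9 * (n : ℚ)) *
          (729 * (n : ℚ) ^ 3 + 81 * (n : ℚ) ^ 2 + 27 * (n : ℚ) - 1)) := by positivity
  have hpyth : ((729 * (n : ℚ) ^ 3 - 81 * (n : ℚ) ^ 2 + 27 * (n : ℚ) + 1) * (9 * (n : ℚ) - 1) /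
          (6 * (1 + 81 * (n : ℚ) ^ 2))) ^ 2 +
      (12 * (n : ℚ) * (1 + 81 * (n : ℚ) ^ 2) /
          ((1 + 9 * (n : ℚ)) * (729 * (n : ℚ) ^ 3 + 81 * (n : ℚ) ^ 2 + 27 * (n : ℚ) - 1))) ^ 2 =
      ((43046721 * (n : ℚ) ^ 8 + 2125764 * (n : ℚ) ^ 6 + 39366 * (n : ℚ) ^ 4 +
            1620 * (n : ℚ) ^ 2 + 1) /
          (6 * (1 + 81 * (n : ℚ) ^ 2) * (1 + 9 * (n : ℚ)) *
            (729 * (n : ℚ) ^ 3 + 81 * (n : ℚ) ^ 2 + 27 * (n : ℚ) - 1))) ^ 2 := by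
    field_simp [(show (↑n * (↑n * (729 * ↑n + 81) + 27) - 1 : ℚ) ≠ 0 by nlinarith)]
    ring
  have harea : 2 * (n : ℚ) =
      ((729 * (n : ℚ) ^ 3 - 81 * (n : ℚ) ^ 2 + 27 * (n : ℚ) + 1) * (9 * (n : ℚ) - 1) /
            (6 * (1 + 81 * (n : ℚ) ^ 2)) + 6 * (n : ℚ)) *
        (12 * (n : ℚ) * (1 + 81 * (n : ℚ) ^ 2) /
          ((1 + 9 * (n : ℚ)) * (729 * (n : ℚ) ^ 3 + 81 * (n : ℚ) ^ 2 + 27 * (n : ℚ) - 1))) := by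
    field_simp [(show (↑n * (↑n * (↑n * 729 + 81) + 27) - 1 : ℚ) ≠ 0 by nlinarith)]
    ring
  refine ⟨ha, hb, hc, hpyth, harea, ?_⟩
  refine ⟨_, _, _, ha, hb, hc, ?_, hpyth⟩
  have : ((3 * n : ℕ) : ℚ) = 3 * (n:ℚ) := by push_cast; ring
  rw [this]
  convert harea using 3
  ring
end

section
/- For all positive integers n and d with n ≠ d^2, the integer n is a d-congruent number, i.e. there exist positive rational numbers a, b, c with 2n = (a + 2d)*b and a^2 + b^2 = c^2. -/
theorem d_congruent_of_ne_sq (n d : ℕ) (hn : 0 < n) (hd : 0 < d) (h : n ≠ d ^ 2) :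
    DCongruent d n := by
  set N : ℚ := (n : ℚ) with hN
  set D : ℚ := (d : ℚ) with hD
  have hN0 : 0 < N := by rw [hN]; exact_mod_cast hn
  have hD0 : 0 < D := by rw [hD]; exact_mod_cast hd
  rcases lt_or_gt_of_ne h with hlt | hgt
  · -- n < d^2 : use a = 4n²d/(d⁴−n²), b = n(d⁴−n²)/(d(d⁴+n²)),
    -- c = n(n⁴+6n²d⁴+d⁸)/(d(d⁴−n²)(d⁴+n²))
    have hlt' : N < D ^ 2 := by
      have : (n : ℚ) < ((d ^ 2 : ℕ) : ℚ) := by exact_mod_cast hlt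
      simpa using this
    have h1 : 0 < D ^ 4 - N ^ 2 := by nlinarith
    have h2 : 0 < D ^ 4 + N ^ 2 := by positivity
    refine ⟨4 * N ^ 2 * D / (D ^ 4 - N ^ 2),
      N * (D ^ 4 - N ^ 2) / (D * (D ^ 4 + N ^ 2)),
      N * (N ^ 4 + 6 * N ^ 2 * D ^ 4 + D ^ 8) / (D * (D ^ 4 - N ^ 2) * (D ^ 4 + N ^ 2)),
      by positivity, by positivity, by positivity, ?_, ?_⟩
    · field_simp
      ring
    · field_simp
      ring
  · -- d^2 < n : use a = (n−d²)/d, b = 2nd/(n+d²), c = (n²+d⁴)/(d(n+d²))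
    have hgt' : D ^ 2 < N := by
      have : ((d ^ 2 : ℕ) : ℚ) < (n : ℚ) := by exact_mod_cast hgt
      simpa using this
    have h1 : 0 < N - D ^ 2 := by linarith
    have h2 : 0 < N + D ^ 2 := by positivity
    refine ⟨(N - D ^ 2) / D, 2 * N * D / (N + D ^ 2),
      (N ^ 2 + D ^ 4) / (D * (N + D ^ 2)),
      by positivity, by positivity, by positivity, ?_, ?_⟩
    · field_simp
      ring
    · field_simp
      ring
end

section
/- For all positive integers n and d with n > d^2, the rational numbers a = 2d*(d^4 + n^2) / ((n - d^2)*(n + d^2)), b = (n - d^2)*(n + d^2) / (2n*d), and c = (n^4 + 6d^4*n^2 + d^8) / (2*(n - d^2)*(n + d^2)*d*n) are positive and satisfy a^2 + b^2 = c^2 and 2n = (a + 2d)*b; in particular, n is a d-congruent number. -/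
theorem d_congruent_of_gt_sq (n d : ℕ) (hn : 0 < n) (hd : 0 < d) (h : (d : ℕ) ^ 2 < n) :
    (0 : ℚ) < 2 * (d : ℚ) * ((d : ℚ) ^ 4 + (n : ℚ) ^ 2) /
        (((n : ℚ) - (d : ℚ) ^ 2) * ((n : ℚ) + (d : ℚ) ^ 2)) ∧
    (0 : ℚ) < ((n : ℚ) - (d : ℚ) ^ 2) * ((n : ℚ) + (d : ℚ) ^ 2) / (2 * (n : ℚ) * (d : ℚ)) ∧
    (0 : ℚ) < ((n : ℚ) ^ 4 + 6 * (d : ℚ) ^ 4 * (n : ℚ) ^ 2 + (d : ℚ) ^ 8) /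
        (2 * ((n : ℚ) - (d : ℚ) ^ 2) * ((n : ℚ) + (d : ℚ) ^ 2) * (d : ℚ) * (n : ℚ)) ∧
    (2 * (d : ℚ) * ((d : ℚ) ^ 4 + (n : ℚ) ^ 2) /
          (((n : ℚ) - (d : ℚ) ^ 2) * ((n : ℚ) + (d : ℚ) ^ 2))) ^ 2 +
      (((n : ℚ) - (d : ℚ) ^ 2) * ((n : ℚ) + (d : ℚ) ^ 2) / (2 * (n : ℚ) * (d : ℚ))) ^ 2 =
      (((n : ℚ) ^ 4 + 6 * (d : ℚ) ^ 4 * (n : ℚ) ^ 2 + (d : ℚ) ^ 8) /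
          (2 * ((n : ℚ) - (d : ℚ) ^ 2) * ((n : ℚ) + (d : ℚ) ^ 2) * (d : ℚ) * (n : ℚ))) ^ 2 ∧
    2 * (n : ℚ) =
      (2 * (d : ℚ) * ((d : ℚ) ^ 4 + (n : ℚ) ^ 2) /
            (((n : ℚ) - (d : ℚ) ^ 2) * ((n : ℚ) + (d : ℚ) ^ 2)) + 2 * (d : ℚ)) *
        (((n : ℚ) - (d : ℚ) ^ 2) * ((n : ℚ) + (d : ℚ) ^ 2) / (2 * (n : ℚ) * (d : ℚ))) ∧
    DCongruent d n := by
  have hdq : (0 : ℚ) < (d : ℚ) := by exact_mod_cast hd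
  have hnq : (0 : ℚ) < (n : ℚ) := by exact_mod_cast hn
  have hsub : (0 : ℚ) < (n : ℚ) - (d : ℚ) ^ 2 := by
    have : ((d : ℚ)) ^ 2 < (n : ℚ) := by exact_mod_cast h
    linarith
  have hadd : (0 : ℚ) < (n : ℚ) + (d : ℚ) ^ 2 := by positivity
  have ha : (0 : ℚ) < 2 * (d : ℚ) * ((d : ℚ) ^ 4 + (n : ℚ) ^ 2) /
      (((n : ℚ) - (d : ℚ) ^ 2) * ((n : ℚ) + (d : ℚ) ^ 2)) := by positivity
  have hb : (0 : ℚ) < ((n : ℚ) - (d : ℚ) ^ 2) * ((n : ℚ) + (d : ℚ) ^ 2) /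
      (2 * (n : ℚ) * (d : ℚ)) := by positivity
  have hc : (0 : ℚ) < ((n : ℚ) ^ 4 + 6 * (d : ℚ) ^ 4 * (n : ℚ) ^ 2 + (d : ℚ) ^ 8) /
      (2 * ((n : ℚ) - (d : ℚ) ^ 2) * ((n : ℚ) + (d : ℚ) ^ 2) * (d : ℚ) * (n : ℚ)) := by
    positivity
  have hsub' : ((n : ℚ) - (d : ℚ) ^ 2) ≠ 0 := ne_of_gt hsub
  have hadd' : ((n : ℚ) + (d : ℚ) ^ 2) ≠ 0 := ne_of_gt hadd
  have hd' : (d : ℚ) ≠ 0 := ne_of_gt hdq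
  have hn' : (n : ℚ) ≠ 0 := ne_of_gt hnq
  have hpy : (2 * (d : ℚ) * ((d : ℚ) ^ 4 + (n : ℚ) ^ 2) /
          (((n : ℚ) - (d : ℚ) ^ 2) * ((n : ℚ) + (d : ℚ) ^ 2))) ^ 2 +
      (((n : ℚ) - (d : ℚ) ^ 2) * ((n : ℚ) + (d : ℚ) ^ 2) / (2 * (n : ℚ) * (d : ℚ))) ^ 2 =
      (((n : ℚ) ^ 4 + 6 * (d : ℚ) ^ 4 * (n : ℚ) ^ 2 + (d : ℚ) ^ 8) /
          (2 * ((n : ℚ) - (d : ℚ) ^ 2) * ((n : ℚ) + (d : ℚ) ^ 2) * (d : ℚ) * (n : ℚ))) ^ 2 := by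
    field_simp
    ring
  have harea : 2 * (n : ℚ) =
      (2 * (d : ℚ) * ((d : ℚ) ^ 4 + (n : ℚ) ^ 2) /
            (((n : ℚ) - (d : ℚ) ^ 2) * ((n : ℚ) + (d : ℚ) ^ 2)) + 2 * (d : ℚ)) *
        (((n : ℚ) - (d : ℚ) ^ 2) * ((n : ℚ) + (d : ℚ) ^ 2) / (2 * (n : ℚ) * (d : ℚ))) := by
    field_simp
    ring
  exact ⟨ha, hb, hc, hpy, harea, _, _, _, ha, hb, hc, harea, hpy⟩
end

section
/- For every integer n ≥ 2, the rational numbers a = 2*(n^2 + 1) / ((n - 1)*(n + 1)), b = (n - 1)*(n + 1) / (2n), and c = (n^4 + 6n^2 + 1) / (2*(n - 1)*(n + 1)*n) are positive and satisfy a^2 + b^2 = c^2 and 2n = (a + 2)*b; in particular, every integer n ≥ 2 is a 1-congruent number. -/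
theorem one_congruent (n : ℕ) (hn : 2 ≤ n) :
    (0 : ℚ) < 2 * ((n : ℚ) ^ 2 + 1) / (((n : ℚ) - 1) * ((n : ℚ) + 1)) ∧
    (0 : ℚ) < ((n : ℚ) - 1) * ((n : ℚ) + 1) / (2 * (n : ℚ)) ∧
    (0 : ℚ) < ((n : ℚ) ^ 4 + 6 * (n : ℚ) ^ 2 + 1) / (2 * ((n : ℚ) - 1) * ((n : ℚ) + 1) * (n : ℚ)) ∧
    (2 * ((n : ℚ) ^ 2 + 1) / (((n : ℚ) - 1) * ((n : ℚ) + 1))) ^ 2 +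
      (((n : ℚ) - 1) * ((n : ℚ) + 1) / (2 * (n : ℚ))) ^ 2 =
      (((n : ℚ) ^ 4 + 6 * (n : ℚ) ^ 2 + 1) /
        (2 * ((n : ℚ) - 1) * ((n : ℚ) + 1) * (n : ℚ))) ^ 2 ∧
    2 * (n : ℚ) =
      (2 * ((n : ℚ) ^ 2 + 1) / (((n : ℚ) - 1) * ((n : ℚ) + 1)) + 2) *
        (((n : ℚ) - 1) * ((n : ℚ) + 1) / (2 * (n : ℚ))) ∧
    DCongruent 1 n := by
  have hn2 : (2 : ℚ) ≤ (n : ℚ) := by exact_mod_cast hn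
  have h1 : (0 : ℚ) < (n : ℚ) - 1 := by linarith
  have h2 : (0 : ℚ) < (n : ℚ) + 1 := by linarith
  have h3 : (0 : ℚ) < (n : ℚ) := by linarith
  have hne1 : ((n : ℚ) - 1) ≠ 0 := ne_of_gt h1
  have hne2 : ((n : ℚ) + 1) ≠ 0 := ne_of_gt h2
  have hne3 : ((n : ℚ)) ≠ 0 := ne_of_gt h3
  have ha : (0 : ℚ) < 2 * ((n : ℚ) ^ 2 + 1) / (((n : ℚ) - 1) * ((n : ℚ) + 1)) :=
    div_pos (by nlinarith) (by positivity)
  have hb : (0 : ℚ) < ((n : ℚ) - 1) * ((n : ℚ) + 1) / (2 * (n : ℚ)) :=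
    div_pos (by positivity) (by positivity)
  have hc : (0 : ℚ) < ((n : ℚ) ^ 4 + 6 * (n : ℚ) ^ 2 + 1) /
      (2 * ((n : ℚ) - 1) * ((n : ℚ) + 1) * (n : ℚ)) :=
    div_pos (by positivity) (by positivity)
  have heq1 : (2 * ((n : ℚ) ^ 2 + 1) / (((n : ℚ) - 1) * ((n : ℚ) + 1))) ^ 2 +
      (((n : ℚ) - 1) * ((n : ℚ) + 1) / (2 * (n : ℚ))) ^ 2 =
      (((n : ℚ) ^ 4 + 6 * (n : ℚ) ^ 2 + 1) /
        (2 * ((n : ℚ) - 1) * ((n : ℚ) + 1) * (n : ℚ))) ^ 2 := by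
    field_simp
    ring
  have heq2 : 2 * (n : ℚ) =
      (2 * ((n : ℚ) ^ 2 + 1) / (((n : ℚ) - 1) * ((n : ℚ) + 1)) + 2) *
        (((n : ℚ) - 1) * ((n : ℚ) + 1) / (2 * (n : ℚ))) := by
    field_simp
    ring
  exact ⟨ha, hb, hc, heq1, heq2, _, _, _, ha, hb, hc, by push_cast; linarith [heq2], heq1⟩
end
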